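/- arXiv:1002.2935 — 8 statements merged into one kernel-verified Lean document; each statement's English description precedes it below -/
import Mathlib

section
/- Let G be a group and let X be a finite subset of G such that every element of X has finite order and every element of X has centraliser of finite index in G. Then the normal closure of the subgroup generated by X in G is finite. -/
open List

private lemma DicmanAux.inv_pow_rep {G : Type*} [Group G] (a : G) (h : IsOfFinOrder a) :
    a ^ (orderOf a - 1) = a⁻¹ := by
  have h1 : a * a ^ (orderOf a - 1) = 1 := by
    rw [← pow_succ', Nat.sub_add_cancel h.orderOf_pos, pow_orderOf_eq_one]
  exact inv_eq_of_mul_eq_one_right h1 ▸ (eq_inv_of_mul_eq_one_right h1).symm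

private lemma DicmanAux.inv_list {G : Type*} [Group G] {Y : Set G}
    (hord : ∀ y ∈ Y, IsOfFinOrder y) :
    ∀ L : List G, (∀ a ∈ L, a ∈ Y) →
      ∃ M : List G, (∀ a ∈ M, a ∈ Y) ∧ M.prod = L.prod⁻¹ := by
  intro L hL
  induction L with
  | nil => exact ⟨[], by simp, by simp⟩
  | cons a T ih =>
    obtain ⟨M, hM, hMp⟩ := ih fun b hb => hL b (mem_cons_of_mem a hb)
    have ha : a ∈ Y := hL a mem_cons_self
    refine ⟨M ++ List.replicate (orderOf a - 1) a, ?_, ?_⟩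
    · intro b hb
      rcases mem_append.1 hb with h | h
      · exact hM b h
      · rwa [eq_of_mem_replicate h]
    · rw [prod_append, hMp, prod_replicate, DicmanAux.inv_pow_rep a (hord a ha),
        prod_cons, mul_inv_rev]

/-- Every element of the closure is a product of a list of elements of `Y`. -/
private lemma DicmanAux.exists_list_rep {G : Type*} [Group G] {Y : Set G}
    (hord : ∀ y ∈ Y, IsOfFinOrder y) {x : G} (hx : x ∈ Subgroup.closure Y) :
    ∃ L : List G, (∀ a ∈ L, a ∈ Y) ∧ L.prod = x := by
  induction hx using Subgroup.closure_induction with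
  | mem y hy => exact ⟨[y], by simpa, by simp⟩
  | one => exact ⟨[], by simp, by simp⟩
  | mul u v _ _ ihu ihv =>
    obtain ⟨L, hL, hLp⟩ := ihu
    obtain ⟨M, hM, hMp⟩ := ihv
    exact ⟨L ++ M, fun a ha => (mem_append.1 ha).elim (hL a) (hM a),
      by rw [prod_append, hLp, hMp]⟩
  | inv u _ ihu =>
    obtain ⟨L, hL, hLp⟩ := ihu
    obtain ⟨M, hM, hMp⟩ := DicmanAux.inv_list hord L hL
    exact ⟨M, hM, by rw [hMp, hLp]⟩

/-- Pull all occurrences of `y` to the front. -/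
private lemma DicmanAux.pull {G : Type*} [Group G] [DecidableEq G] {Y : Set G}
    (hconj : ∀ y ∈ Y, ∀ g : G, g * y * g⁻¹ ∈ Y) (y : G) :
    ∀ L : List G, (∀ a ∈ L, a ∈ Y) →
      ∃ M : List G, (∀ a ∈ M, a ∈ Y) ∧ M.length + L.count y = L.length ∧
        L.prod = y ^ (L.count y) * M.prod := by
  intro L hL
  induction L with
  | nil => exact ⟨[], by simp, by simp, by simp⟩
  | cons a T ih =>
    obtain ⟨M, hM, hMl, hMp⟩ := ih fun b hb => hL b (mem_cons_of_mem a hb)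
    have ha : a ∈ Y := hL a mem_cons_self
    by_cases hay : a = y
    · subst hay
      refine ⟨M, hM, ?_, ?_⟩
      · rw [count_cons_self, length_cons]; omega
      · rw [count_cons_self, prod_cons, hMp, pow_succ', mul_assoc]
    · set k := T.count y with hk
      have hcnt : (a :: T).count y = k := by
        rw [count_cons_of_ne hay]
      refine ⟨((y ^ k)⁻¹ * a * (y ^ k)) :: M, ?_, ?_, ?_⟩
      · intro b hb
        rcases mem_cons.1 hb with h | h
        · subst h
          simpa using hconj a ha (y ^ k)⁻¹
        · exact hM b h
      · rw [hcnt, length_cons, length_cons]; omega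
      · rw [hcnt, prod_cons, prod_cons, hMp]
        group
/-- Every product of a list over `Y` equals a product of a list over `Y` of length at most
`∑ y ∈ F, orderOf y`. -/
private lemma DicmanAux.reduce {G : Type*} [Group G] [DecidableEq G] {Y : Set G}
    (hfin : Y.Finite) (hord : ∀ y ∈ Y, IsOfFinOrder y)
    (hconj : ∀ y ∈ Y, ∀ g : G, g * y * g⁻¹ ∈ Y) :
    ∀ n (L : List G), L.length ≤ n → (∀ a ∈ L, a ∈ Y) →
      ∃ M : List G, (∀ a ∈ M, a ∈ Y) ∧
        M.length ≤ ∑ y ∈ hfin.toFinset, orderOf y ∧ M.prod = L.prod := by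
  intro n
  induction n with
  | zero =>
    intro L hLn hL
    exact ⟨L, hL, by omega, rfl⟩
  | succ n ih =>
    intro L hLn hL
    by_cases hbig : ∃ y ∈ Y, orderOf y ≤ L.count y
    · obtain ⟨y, hy, hcy⟩ := hbig
      obtain ⟨M, hM, hMl, hMp⟩ := DicmanAux.pull hconj y L hL
      set k := L.count y
      set o := orderOf y with ho
      have hopos : 0 < o := (hord y hy).orderOf_pos
      -- new list
      refine ih (List.replicate (k % o) y ++ M) ?_ ?_ |>.imp fun M' hM' =>
        ⟨hM'.1, hM'.2.1, ?_⟩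
      · rw [length_append, length_replicate]
        have : k % o < o := Nat.mod_lt _ hopos
        omega
      · intro b hb
        rcases mem_append.1 hb with h | h
        · rwa [eq_of_mem_replicate h]
        · exact hM b h
      · rw [hM'.2.2, prod_append, prod_replicate, pow_mod_orderOf, hMp]
    · push_neg at hbig
      refine ⟨L, hL, ?_, rfl⟩
      classical
      have h1 : L.length = ∑ y ∈ L.toFinset, L.count y :=
        (List.sum_toFinset_count_eq_length L).symm
      have hsub : L.toFinset ⊆ hfin.toFinset := by
        intro a haf
        rw [Set.Finite.mem_toFinset]
        exact hL a (List.mem_toFinset.1 haf)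
      calc L.length = ∑ y ∈ L.toFinset, L.count y := h1
        _ ≤ ∑ y ∈ hfin.toFinset, L.count y :=
            Finset.sum_le_sum_of_subset_of_nonneg hsub (fun _ _ _ => Nat.zero_le _)
        _ ≤ ∑ y ∈ hfin.toFinset, orderOf y := by
            refine Finset.sum_le_sum fun y hyF => ?_
            exact le_of_lt (hbig y (hfin.mem_toFinset.1 hyF))

private lemma DicmanAux.conjOf_finite {G : Type*} [Group G] (x : G)
    (hc : (Subgroup.centralizer {x}).FiniteIndex) : (conjugatesOf x).Finite := by
  haveI := hc
  set H := Subgroup.centralizer ({x} : Set G)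
  let f : G ⧸ H → G := fun q => Quotient.liftOn' q (fun g => g * x * g⁻¹) (by
    intro a b hab
    have hab' : a⁻¹ * b ∈ H := QuotientGroup.leftRel_apply.mp hab
    have hcom : x * (a⁻¹ * b) = (a⁻¹ * b) * x :=
      Subgroup.mem_centralizer_iff.1 hab' x (Set.mem_singleton x)
    have hb : b = a * (a⁻¹ * b) := by group
    calc a * x * a⁻¹ = a * (x * (a⁻¹ * b) * (a⁻¹ * b)⁻¹) * a⁻¹ := by group
      _ = a * ((a⁻¹ * b) * x * (a⁻¹ * b)⁻¹) * a⁻¹ := by rw [hcom]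
      _ = (a * (a⁻¹ * b)) * x * (a * (a⁻¹ * b))⁻¹ := by group
      _ = b * x * b⁻¹ := by rw [← hb])
  have hsub : conjugatesOf x ⊆ Set.range f := by
    intro y hy
    obtain ⟨c, hc2⟩ := isConj_iff.1 hy
    exact ⟨QuotientGroup.mk c, hc2⟩
  exact (Set.finite_range f).subset hsub

private lemma DicmanAux.bounded_lists_finite {G : Type*} [Group G] {Y : Set G}
    (hfin : Y.Finite) (N : ℕ) :
    {x : G | ∃ M : List G, (∀ a ∈ M, a ∈ Y) ∧ M.length ≤ N ∧ M.prod = x}.Finite := by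
  classical
  have h1 : {l : List ↥hfin.toFinset | l.length ≤ N}.Finite := List.finite_length_le _ N
  refine ((h1.image (fun l => (l.map Subtype.val).prod))).subset ?_
  rintro x ⟨M, hM, hMl, rfl⟩
  refine ⟨M.attach.map (fun a => (⟨a.1, hfin.mem_toFinset.2 (hM a.1 a.2)⟩ : ↥hfin.toFinset)),
    ?_, ?_⟩
  · simpa using hMl
  · simp [List.map_map]

private lemma DicmanAux.closure_finite {G : Type*} [Group G] {Y : Set G}
    (hfin : Y.Finite) (hord : ∀ y ∈ Y, IsOfFinOrder y)
    (hconj : ∀ y ∈ Y, ∀ g : G, g * y * g⁻¹ ∈ Y) :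
    ((Subgroup.closure Y : Subgroup G) : Set G).Finite := by
  classical
  refine (DicmanAux.bounded_lists_finite hfin (∑ y ∈ hfin.toFinset, orderOf y)).subset ?_
  intro x hx
  obtain ⟨L, hL, hLp⟩ := DicmanAux.exists_list_rep hord hx
  obtain ⟨M, hM, hMl, hMp⟩ := DicmanAux.reduce hfin hord hconj L.length L le_rfl hL
  exact ⟨M, hM, hMl, by rw [hMp, hLp]⟩

/-- Dicman's Lemma: if `X` is a finite subset of a group `G` consisting of elements of
finite order whose centralisers have finite index in `G`, then the normal closure of the
subgroup generated by `X` is finite. -/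
theorem stmt4 {G : Type*} [Group G] (X : Set G) (hfin : X.Finite)
    (hord : ∀ x ∈ X, IsOfFinOrder x)
    (hcent : ∀ x ∈ X, (Subgroup.centralizer {x}).FiniteIndex) :
    (Subgroup.normalClosure X : Set G).Finite := by
  have hYfin : (Group.conjugatesOfSet X).Finite := by
    rw [Group.conjugatesOfSet]
    exact Set.Finite.biUnion hfin fun x hx => DicmanAux.conjOf_finite x (hcent x hx)
  have hYord : ∀ y ∈ Group.conjugatesOfSet X, IsOfFinOrder y := by
    intro y hy
    obtain ⟨a, haX, hconj⟩ := Group.mem_conjugatesOfSet_iff.1 hy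
    obtain ⟨c, hc⟩ := isConj_iff.1 hconj
    obtain ⟨n, hn, hne⟩ := isOfFinOrder_iff_pow_eq_one.1 (hord a haX)
    refine isOfFinOrder_iff_pow_eq_one.2 ⟨n, hn, ?_⟩
    rw [← hc, conj_pow, hne, mul_one, mul_inv_cancel]
  have hYconj : ∀ y ∈ Group.conjugatesOfSet X, ∀ g : G, g * y * g⁻¹ ∈ Group.conjugatesOfSet X :=
    fun y hy g => Group.conj_mem_conjugatesOfSet hy
  exact DicmanAux.closure_finite hYfin hYord hYconj
end

section
/- Let G be a residually finite group with no non-trivial finite normal subgroups, and let H be a subgroup of G of finite index. If H is just infinite, then every subgroup of G containing H is just infinite. If H is hereditarily just infinite, then G is hereditarily just infinite. -/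
/-- A group is just infinite if it is infinite and every non-trivial normal subgroup has
finite index. -/
def JustInfinite (G : Type*) [Group G] : Prop :=
  Infinite G ∧ ∀ N : Subgroup G, N.Normal → N ≠ ⊥ → N.FiniteIndex

/-- A group is hereditarily just infinite if every finite index subgroup (including the
group itself) is just infinite. -/
def HereditarilyJustInfinite (G : Type*) [Group G] : Prop :=
  ∀ H : Subgroup G, H.FiniteIndex → JustInfinite H

open Subgroup Pointwise
open scoped commutatorElement

section Helpers

variable {G : Type*} [Group G]

/-- The join of two finite, elementwise-commuting subgroups is finite. -/
lemma aux_finite_sup (H J : Subgroup G) (hH : (H : Set G).Finite) (hJ : (J : Set G).Finite)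
    (hc : ∀ h ∈ H, ∀ j ∈ J, h * j = j * h) : ((H ⊔ J : Subgroup G) : Set G).Finite := by
  let P : Subgroup G :=
    { carrier := (H : Set G) * (J : Set G)
      one_mem' := ⟨1, one_mem H, 1, one_mem J, one_mul 1⟩
      mul_mem' := by
        rintro a b ⟨h, hh, j, hj, rfl⟩ ⟨h', hh', j', hj', rfl⟩
        refine ⟨h * h', mul_mem hh hh', j * j', mul_mem hj hj', ?_⟩
        have : j * h' = h' * j := (hc h' hh' j hj).symm
        calc h * h' * (j * j') = h * (h' * j) * j' := by group
          _ = h * (j * h') * j' := by rw [this]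
          _ = h * j * (h' * j') := by group
      inv_mem' := by
        rintro a ⟨h, hh, j, hj, rfl⟩
        refine ⟨h⁻¹, inv_mem hh, j⁻¹, inv_mem hj, ?_⟩
        show h⁻¹ * j⁻¹ = (h * j)⁻¹
        rw [mul_inv_rev]
        exact hc h⁻¹ (inv_mem hh) j⁻¹ (inv_mem hj) }
  have hle : H ⊔ J ≤ P := by
    refine sup_le (fun x hx => ⟨x, hx, 1, one_mem J, (mul_one x)⟩)
      (fun x hx => ⟨1, one_mem H, x, hx, (one_mul x)⟩)
  exact (hH.mul hJ).subset (SetLike.coe_subset_coe.mpr hle)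

/-- The closure of a finite set of pairwise-commuting torsion elements is finite. -/
lemma aux_closure_finite {s : Set G} (hs : s.Finite) (htor : ∀ x ∈ s, IsOfFinOrder x)
    (hcomm : ∀ x ∈ s, ∀ y ∈ s, x * y = y * x) :
    ((Subgroup.closure s : Subgroup G) : Set G).Finite := by
  revert htor hcomm
  refine Set.Finite.induction_on
    (motive := fun s _ => (∀ x ∈ s, IsOfFinOrder x) → (∀ x ∈ s, ∀ y ∈ s, x * y = y * x) →
      ((Subgroup.closure s : Subgroup G) : Set G).Finite) s hs ?_ ?_
  · intro _ _
    rw [Subgroup.closure_empty]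
    exact Set.finite_singleton 1
  · intro a t hat htf ih htor hcomm
    have htor' : ∀ x ∈ t, IsOfFinOrder x := fun x hx => htor x (Set.mem_insert_of_mem a hx)
    have hcomm' : ∀ x ∈ t, ∀ y ∈ t, x * y = y * x := fun x hx y hy =>
      hcomm x (Set.mem_insert_of_mem a hx) y (Set.mem_insert_of_mem a hy)
    have hins : Subgroup.closure (insert a t) = Subgroup.zpowers a ⊔ Subgroup.closure t := by
      rw [Set.insert_eq, Subgroup.closure_union, Subgroup.zpowers_eq_closure]
    rw [hins]
    have haz : IsOfFinOrder a := htor a (Set.mem_insert a t)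
    have hcen : Subgroup.closure t ≤ Subgroup.centralizer {a} := by
      rw [Subgroup.closure_le]
      intro y hy
      rw [SetLike.mem_coe, Subgroup.mem_centralizer_iff]
      rintro h hh
      rw [Set.mem_singleton_iff] at hh
      subst hh
      exact hcomm h (Set.mem_insert h t) y (Set.mem_insert_of_mem h hy)
    refine aux_finite_sup _ _ (haz.finite_zpowers) (ih htor' hcomm') ?_
    rintro h ⟨k, rfl⟩ j hj
    have hcj : Commute a j := by
      have := hcen hj
      rw [Subgroup.mem_centralizer_iff] at this
      exact this a rfl
    exact (hcj.zpow_left k).eq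

/-- If the quotient by the center is finite, there are finitely many commutators. -/
lemma aux_commutatorSet_finite (hq : Finite (G ⧸ Subgroup.center G)) :
    Finite (commutatorSet G) := by
  set Z := Subgroup.center G
  have key : ∀ g h : G, ⁅g, h⁆ =
      ⁅(QuotientGroup.mk g : G ⧸ Z).out, (QuotientGroup.mk h : G ⧸ Z).out⁆ := by
    have central : ∀ g : G, ∃ z ∈ Z, g = (QuotientGroup.mk g : G ⧸ Z).out * z := by
      intro g
      have h1 : (QuotientGroup.mk ((QuotientGroup.mk g : G ⧸ Z).out) : G ⧸ Z)
          = QuotientGroup.mk g := (QuotientGroup.mk g : G ⧸ Z).out_eq'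
      exact ⟨_, QuotientGroup.eq.mp h1, by group⟩
    intro g h
    obtain ⟨z, hz, hgz⟩ := central g
    obtain ⟨w, hw, hhw⟩ := central h
    set r := (QuotientGroup.mk g : G ⧸ Z).out
    set u := (QuotientGroup.mk h : G ⧸ Z).out
    have hzc : ∀ x : G, x * z = z * x := Subgroup.mem_center_iff.mp hz
    have hwc : ∀ x : G, x * w = w * x := Subgroup.mem_center_iff.mp hw
    rw [hgz, hhw, commutatorElement_def, commutatorElement_def]
    calc r * z * (u * w) * (r * z)⁻¹ * (u * w)⁻¹
        = r * (z * u) * w * (z⁻¹ * r⁻¹) * (w⁻¹ * u⁻¹) := by group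
      _ = r * (u * z) * w * (z⁻¹ * r⁻¹) * (w⁻¹ * u⁻¹) := by rw [hzc u]
      _ = r * u * ((z * w * z⁻¹) * r⁻¹) * (w⁻¹ * u⁻¹) := by group
      _ = r * u * (w * r⁻¹) * (w⁻¹ * u⁻¹) := by
          have : z * w * z⁻¹ = w := by rw [hwc z]; group
          rw [this]
      _ = r * u * (r⁻¹ * w) * (w⁻¹ * u⁻¹) := by rw [hwc r⁻¹]
      _ = r * u * r⁻¹ * u⁻¹ := by group
  have hsub : (commutatorSet G) ⊆
      Set.range (fun p : (G ⧸ Z) × (G ⧸ Z) => ⁅p.1.out, p.2.out⁆) := by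
    rintro x ⟨g, h, rfl⟩
    exact ⟨(QuotientGroup.mk g, QuotientGroup.mk h), (key g h).symm⟩
  exact ((Set.finite_range _).subset hsub).to_subtype

/-- Key lemma: a finite subgroup of a finite-index subgroup `K`, normalized by `K`,
must be trivial (given residual finiteness and no nontrivial finite normal subgroups). -/
lemma aux_fin {G : Type*} [Group G]
    (hres : ∀ g : G, g ≠ 1 → ∃ N : Subgroup G, N.Normal ∧ N.FiniteIndex ∧ g ∉ N)
    (hfin : ∀ N : Subgroup G, N.Normal → (N : Set G).Finite → N = ⊥)
    (K B : Subgroup G) (hK : K.FiniteIndex) (hBK : B ≤ K)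
    (hconj : ∀ k ∈ K, ∀ b ∈ B, k * b * k⁻¹ ∈ B) (hB : (B : Set G).Finite) : B = ⊥ := by
  clear hBK
  classical
  haveI := hK
  haveI : Finite (B : Set G) := hB.to_subtype
  haveI : Finite ↥B := by
    exact Finite.of_injective (fun b : ↥B => (⟨(b : G), b.2⟩ : (B : Set G)))
      (fun a b h => by
        apply Subtype.ext
        exact congrArg Subtype.val h)
  -- torsion
  have htorB : ∀ b ∈ B, IsOfFinOrder b := by
    intro b hb
    refine finite_zpowers.mp ?_
    exact hB.subset (SetLike.coe_subset_coe.mpr ((Subgroup.zpowers_le).mpr hb))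
  -- the finite-index normal subgroup M avoiding B
  have hchoice : ∀ x : {x : ↥B // (x : G) ≠ 1}, ∃ N : Subgroup G,
      N.Normal ∧ N.FiniteIndex ∧ (x : G) ∉ N := fun x => hres _ x.2
  choose f hf using hchoice
  let M : Subgroup G := ⨅ x, f x
  have hMnormal : M.Normal := by
    constructor
    intro n hn g
    rw [Subgroup.mem_iInf] at hn ⊢
    exact fun x => (hf x).1.conj_mem n (hn x) g
  haveI hMfi : M.FiniteIndex := Subgroup.finiteIndex_iInf fun x => (hf x).2.1
  have hMB : M ⊓ B = ⊥ := by
    rw [eq_bot_iff]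
    intro x hx
    rw [Subgroup.mem_bot]
    by_contra hx1
    have : x ∈ f ⟨⟨x, hx.2⟩, hx1⟩ := (Subgroup.mem_iInf.mp hx.1) _
    exact (hf ⟨⟨x, hx.2⟩, hx1⟩).2.2 this
  -- the finite-index normal subgroup R centralized by B
  let R : Subgroup G := M ⊓ K.normalCore
  haveI hRnormal : R.Normal := Subgroup.normal_inf_normal M K.normalCore
  haveI hRfi : R.FiniteIndex := inferInstance
  have hRK : R ≤ K := inf_le_right.trans K.normalCore_le
  have hcomm : ∀ b ∈ B, ∀ r ∈ R, b * r = r * b := by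
    intro b hb r hr
    have h1 : b * r * b⁻¹ * r⁻¹ ∈ M := by
      have : b * r * b⁻¹ ∈ M := hMnormal.conj_mem r hr.1 b
      exact Subgroup.mul_mem _ this (Subgroup.inv_mem _ hr.1)
    have h2 : b * r * b⁻¹ * r⁻¹ ∈ B := by
      have h3 : r * b⁻¹ * r⁻¹ ∈ B := hconj r (hRK hr) b⁻¹ (Subgroup.inv_mem _ hb)
      have : b * (r * b⁻¹ * r⁻¹) ∈ B := Subgroup.mul_mem _ hb h3
      convert this using 1
      group
    have : b * r * b⁻¹ * r⁻¹ = 1 := by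
      have := hMB ▸ (Subgroup.mem_inf.mpr ⟨h1, h2⟩ : b * r * b⁻¹ * r⁻¹ ∈ M ⊓ B)
      rwa [Subgroup.mem_bot] at this
    have heq2 : (b * r) * (r * b)⁻¹ = 1 := by
      have heq : (b * r) * (r * b)⁻¹ = b * r * b⁻¹ * r⁻¹ := by group
      rw [heq]
      exact this
    exact mul_inv_eq_one.mp heq2
  -- the set of conjugates X
  let X : Set G := {x | ∃ g : G, ∃ b ∈ B, x = g * b * g⁻¹}
  have hBX : (B : Set G) ⊆ X := fun b hb => ⟨1, b, hb, by group⟩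
  have hXfin : X.Finite := by
    have hsub : X ⊆ Set.range
        (fun p : (G ⧸ K) × ↥B => p.1.out * (p.2 : G) * p.1.out⁻¹) := by
      rintro x ⟨g, b, hb, rfl⟩
      have hout : (QuotientGroup.mk ((QuotientGroup.mk g : G ⧸ K).out) : G ⧸ K)
          = QuotientGroup.mk g := (QuotientGroup.mk g : G ⧸ K).out_eq'
      have hk : ((QuotientGroup.mk g : G ⧸ K).out)⁻¹ * g ∈ K := QuotientGroup.eq.mp hout
      set r := (QuotientGroup.mk g : G ⧸ K).out
      set k := r⁻¹ * g with hkdef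
      have hb' : k * b * k⁻¹ ∈ B := hconj k hk b hb
      refine ⟨(QuotientGroup.mk g, ⟨k * b * k⁻¹, hb'⟩), ?_⟩
      show r * (k * b * k⁻¹) * r⁻¹ = g * b * g⁻¹
      have : g = r * k := by rw [hkdef]; group
      rw [this]
      group
    exact (Set.finite_range _).subset hsub
  have hXtor : ∀ x ∈ X, IsOfFinOrder x := by
    rintro x ⟨g, b, hb, rfl⟩
    have : g * b * g⁻¹ = (MulAut.conj g).toMonoidHom b := rfl
    rw [this]
    exact MonoidHom.isOfFinOrder _ (htorB b hb)
  have hXconj : ∀ x ∈ X, ∀ g : G, g * x * g⁻¹ ∈ X := by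
    rintro x ⟨g', b, hb, rfl⟩ g
    exact ⟨g * g', b, hb, by group⟩
  -- W, its normality, and centralizing R
  let W : Subgroup G := Subgroup.closure X
  have hWnormal : W.Normal := by
    constructor
    intro n hn g
    induction hn using Subgroup.closure_induction with
    | mem x hx => exact Subgroup.subset_closure (hXconj x hx g)
    | one => simpa using Subgroup.one_mem W
    | mul x y hx hy ihx ihy =>
      have : g * (x * y) * g⁻¹ = (g * x * g⁻¹) * (g * y * g⁻¹) := by group
      rw [this]
      exact Subgroup.mul_mem _ ihx ihy
    | inv x hx ihx =>
      have : g * x⁻¹ * g⁻¹ = (g * x * g⁻¹)⁻¹ := by group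
      rw [this]
      exact Subgroup.inv_mem _ ihx
  have hWR : ∀ w ∈ W, ∀ r ∈ R, w * r = r * w := by
    have hle : W ≤ Subgroup.centralizer (R : Set G) := by
      rw [Subgroup.closure_le]
      rintro x ⟨g, b, hb, rfl⟩
      rw [SetLike.mem_coe, Subgroup.mem_centralizer_iff]
      intro r hr
      have hrin : g⁻¹ * r * g ∈ R := by
        have := hRnormal.conj_mem r hr g⁻¹
        simpa using this
      have hb' : b * (g⁻¹ * r * g) = (g⁻¹ * r * g) * b := hcomm b hb _ hrin
      calc r * (g * b * g⁻¹) = g * ((g⁻¹ * r * g) * b) * g⁻¹ := by group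
        _ = g * (b * (g⁻¹ * r * g)) * g⁻¹ := by rw [hb']
        _ = g * b * g⁻¹ * r := by group
    intro w hw r hr
    have := Subgroup.mem_centralizer_iff.mp (hle hw) r (SetLike.mem_coe.mpr hr)
    exact this.symm
  -- center of W has finite index
  haveI : (R.subgroupOf W).FiniteIndex := Subgroup.instFiniteIndex_subgroupOf R W
  have hcen : R.subgroupOf W ≤ Subgroup.center ↥W := by
    intro z hz
    rw [Subgroup.mem_center_iff]
    intro w
    apply Subtype.ext
    show (w : G) * (z : G) = (z : G) * (w : G)
    exact hWR (w : G) w.2 (z : G) hz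
  haveI : (Subgroup.center ↥W).FiniteIndex := Subgroup.finiteIndex_of_le hcen
  haveI : Finite (↥W ⧸ Subgroup.center ↥W) := Subgroup.finite_quotient_of_finiteIndex
  haveI : Finite (commutatorSet ↥W) := aux_commutatorSet_finite inferInstance
  haveI hcfin : Finite (_root_.commutator ↥W) := inferInstance
  -- commutator of W is trivial
  have hmap : Subgroup.map W.subtype (_root_.commutator ↥W) = ⁅W, W⁆ := by
    rw [_root_.commutator, Subgroup.map_commutator]
    congr 1 <;> rw [← MonoidHom.range_eq_map, Subgroup.range_subtype]
  have hWWfin : ((⁅W, W⁆ : Subgroup G) : Set G).Finite := by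
    rw [← hmap, Subgroup.coe_map]
    exact Set.Finite.image _ (Set.toFinite _)
  haveI := hWnormal
  have hWWbot : (⁅W, W⁆ : Subgroup G) = ⊥ :=
    hfin _ (Subgroup.commutator_normal W W) hWWfin
  have hWcomm : ∀ x ∈ W, ∀ y ∈ W, x * y = y * x := by
    have hle := Subgroup.commutator_eq_bot_iff_le_centralizer.mp hWWbot
    intro x hx y hy
    exact (Subgroup.mem_centralizer_iff.mp (hle hx) y (SetLike.mem_coe.mpr hy)).symm
  -- W is finite, hence trivial
  have hWfin : ((W : Subgroup G) : Set G).Finite := by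
    refine aux_closure_finite hXfin hXtor ?_
    intro x hx y hy
    exact hWcomm x (Subgroup.subset_closure hx) y (Subgroup.subset_closure hy)
  have hWbot : W = ⊥ := hfin W hWnormal hWfin
  have hBW : B ≤ W := fun b hb => Subgroup.subset_closure (hBX hb)
  rw [hWbot] at hBW
  exact le_bot_iff.mp hBW

variable {G : Type*} [Group G]

lemma aux_ji_iff (H : Subgroup G) :
    JustInfinite ↥H ↔ Infinite ↥H ∧ ∀ B : Subgroup G, B ≤ H →
      (∀ h ∈ H, ∀ b ∈ B, h * b * h⁻¹ ∈ B) → B ≠ ⊥ → B.relIndex H ≠ 0 := by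
  constructor
  · rintro ⟨hinf, hcond⟩
    refine ⟨hinf, fun B hBH hconj hB0 => ?_⟩
    have hnormal : (B.subgroupOf H).Normal := by
      constructor
      rintro n hn g
      rw [Subgroup.mem_subgroupOf] at hn ⊢
      exact hconj (g : G) g.2 (n : G) hn
    have hne : B.subgroupOf H ≠ ⊥ := by
      intro hbot
      apply hB0
      rw [eq_bot_iff]
      intro x hx
      have hxH : x ∈ H := hBH hx
      have : (⟨x, hxH⟩ : ↥H) ∈ B.subgroupOf H := by
        rw [Subgroup.mem_subgroupOf]
        exact hx
      rw [hbot, Subgroup.mem_bot] at this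
      rw [Subgroup.mem_bot]
      exact congrArg Subtype.val this
    exact (hcond _ hnormal hne).index_ne_zero
  · rintro ⟨hinf, hcond⟩
    refine ⟨hinf, fun N hN hN0 => ?_⟩
    set B : Subgroup G := N.map H.subtype with hBdef
    have hBH : B ≤ H := Subgroup.map_subtype_le N
    have hNB : B.subgroupOf H = N :=
      Subgroup.comap_map_eq_self_of_injective (Subgroup.subtype_injective H) N
    have hconj : ∀ h ∈ H, ∀ b ∈ B, h * b * h⁻¹ ∈ B := by
      intro h hh b hb
      obtain ⟨b', hb', rfl⟩ := hb
      refine ⟨(⟨h, hh⟩ : ↥H) * b' * (⟨h, hh⟩ : ↥H)⁻¹, hN.conj_mem b' hb' _, rfl⟩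
    have hB0 : B ≠ ⊥ := by
      intro hbot
      apply hN0
      rw [← hNB, hbot]
      rw [eq_bot_iff]
      intro x hx
      rw [Subgroup.mem_subgroupOf, Subgroup.mem_bot] at hx
      rw [Subgroup.mem_bot]
      exact Subtype.ext hx
    have := hcond B hBH hconj hB0
    rw [Subgroup.relIndex] at this
    rw [← hNB]
    exact ⟨this⟩

lemma aux_hji_forward (H : Subgroup G) (h : HereditarilyJustInfinite ↥H) :
    ∀ A : Subgroup G, A ≤ H → A.relIndex H ≠ 0 →
      Infinite ↥A ∧ ∀ B : Subgroup G, B ≤ A → (∀ a ∈ A, ∀ b ∈ B, a * b * a⁻¹ ∈ B) →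
        B ≠ ⊥ → B.relIndex A ≠ 0 := by
  intro A hAH hArel
  have hfi : (A.subgroupOf H).FiniteIndex := ⟨hArel⟩
  have hji := h (A.subgroupOf H) hfi
  rw [aux_ji_iff] at hji
  obtain ⟨hinf, hcond⟩ := hji
  constructor
  · exact Infinite.of_injective _ (Subgroup.subgroupOfEquivOfLe hAH).injective
  · intro B hBA hconj hB0
    have hBH : B ≤ H := hBA.trans hAH
    have h1 : B.subgroupOf H ≤ A.subgroupOf H := Subgroup.comap_mono hBA
    have h2 : ∀ x ∈ A.subgroupOf H, ∀ b ∈ B.subgroupOf H,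
        x * b * x⁻¹ ∈ B.subgroupOf H := by
      intro x hx b hb
      rw [Subgroup.mem_subgroupOf] at hx hb ⊢
      exact hconj _ hx _ hb
    have h3 : B.subgroupOf H ≠ ⊥ := by
      intro hbot
      apply hB0
      rw [eq_bot_iff]
      intro x hx
      have : (⟨x, hBH hx⟩ : ↥H) ∈ B.subgroupOf H := by
        rw [Subgroup.mem_subgroupOf]; exact hx
      rw [hbot, Subgroup.mem_bot] at this
      rw [Subgroup.mem_bot]
      exact congrArg Subtype.val this
    have := hcond (B.subgroupOf H) h1 h2 h3
    rwa [Subgroup.relIndex_subgroupOf hAH] at this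

lemma aux_tail {B K : Subgroup G} (h : (B ⊓ K).index ≠ 0) : B.relIndex K ≠ 0 := by
  rw [← Subgroup.inf_relIndex_right]
  intro h0
  apply h
  have := Subgroup.relIndex_mul_index (inf_le_right : B ⊓ K ≤ K)
  rw [h0, zero_mul] at this
  exact this.symm

/-- If `B ⊓ H` is trivial and `H` has finite index, then `B` is finite. -/
lemma aux_finite_of_disjoint {B H : Subgroup G} (hH : H.FiniteIndex) (hBH : B ⊓ H = ⊥) :
    (B : Set G).Finite := by
  haveI := hH
  rw [← Set.finite_coe_iff]
  refine Finite.of_injective (fun b : (B : Set G) => (QuotientGroup.mk (b : G) : G ⧸ H)) ?_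
  rintro ⟨b₁, hb₁⟩ ⟨b₂, hb₂⟩ hb
  have : b₁⁻¹ * b₂ ∈ H := QuotientGroup.eq.mp hb
  have hB : b₁⁻¹ * b₂ ∈ B := Subgroup.mul_mem _ (Subgroup.inv_mem _ hb₁) hb₂
  have : b₁⁻¹ * b₂ ∈ B ⊓ H := Subgroup.mem_inf.mpr ⟨hB, this⟩
  rw [hBH, Subgroup.mem_bot] at this
  apply Subtype.ext
  exact (inv_mul_eq_one.mp this)

end Helpers

/-- Let `G` be residually finite with no non-trivial finite normal subgroups, and let `H`
be a finite index subgroup.  If `H` is just infinite then so is every subgroup of `G`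
containing `H`; if `H` is hereditarily just infinite then so is `G`. -/
theorem stmt7 {G : Type*} [Group G]
    (hres : ∀ g : G, g ≠ 1 → ∃ N : Subgroup G, N.Normal ∧ N.FiniteIndex ∧ g ∉ N)
    (hfin : ∀ N : Subgroup G, N.Normal → (N : Set G).Finite → N = ⊥)
    (H : Subgroup G) (hidx : H.FiniteIndex) :
    (JustInfinite H → ∀ K : Subgroup G, H ≤ K → JustInfinite K) ∧
    (HereditarilyJustInfinite H → HereditarilyJustInfinite G) := by
  haveI := hidx
  constructor
  · intro hJI K hHK
    obtain ⟨hinfH, hcondH⟩ := (aux_ji_iff H).mp hJI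
    haveI hKfi : K.FiniteIndex := Subgroup.finiteIndex_of_le hHK
    rw [aux_ji_iff]
    refine ⟨Infinite.of_injective _ (Subgroup.inclusion_injective hHK), ?_⟩
    intro B hBK hconj hB0
    by_cases hBH : B ⊓ H = ⊥
    · exact absurd
        (aux_fin hres hfin K B hKfi hBK hconj (aux_finite_of_disjoint hidx hBH)) hB0
    · have hc2 : ∀ h ∈ H, ∀ b ∈ B ⊓ H, h * b * h⁻¹ ∈ B ⊓ H := by
        intro h hh b hb
        exact ⟨hconj h (hHK hh) b hb.1, H.mul_mem (H.mul_mem hh hb.2) (H.inv_mem hh)⟩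
      have hrel := hcondH (B ⊓ H) inf_le_right hc2 hBH
      have hidx1 : (B ⊓ H).index ≠ 0 := by
        rw [← Subgroup.relIndex_mul_index (inf_le_right : B ⊓ H ≤ H)]
        exact Nat.mul_ne_zero hrel hidx.index_ne_zero
      apply aux_tail
      intro h0
      apply hidx1
      have hdvd := Subgroup.index_dvd_of_le (inf_le_inf_left B hHK)
      rw [h0] at hdvd
      exact Nat.eq_zero_of_zero_dvd hdvd
  · intro hHJI L hLfi
    haveI := hLfi
    have hfwd := aux_hji_forward H hHJI
    have hinfH : Infinite ↥H :=
      (hfwd H le_rfl (by rw [Subgroup.relIndex_self]; exact one_ne_zero)).1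
    have hinfG : Infinite G := Infinite.of_injective _ (Subgroup.subtype_injective H)
    rw [aux_ji_iff]
    constructor
    · by_contra hf
      rw [not_infinite_iff_finite] at hf
      haveI := hf
      haveI : Finite G :=
        Finite.of_equiv _ (Subgroup.groupEquivQuotientProdSubgroup (s := L)).symm
      exact not_finite G
    · intro B hBL hconj hB0
      by_cases hBH : B ⊓ H = ⊥
      · exact absurd
          (aux_fin hres hfin L B hLfi hBL hconj (aux_finite_of_disjoint hidx hBH)) hB0
      · set A := L ⊓ H with hAdef
        have hAH : A ≤ H := inf_le_right
        have hArel : A.relIndex H ≠ 0 := by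
          rw [hAdef, Subgroup.inf_relIndex_right]
          exact Subgroup.FiniteIndex.index_ne_zero (H := L.subgroupOf H)
        obtain ⟨_, hc⟩ := hfwd A hAH hArel
        have hBHA : B ⊓ H ≤ A := inf_le_inf hBL le_rfl
        have hc2 : ∀ a ∈ A, ∀ b ∈ B ⊓ H, a * b * a⁻¹ ∈ B ⊓ H := fun a ha b hb =>
          ⟨hconj a ha.1 b hb.1, H.mul_mem (H.mul_mem ha.2 hb.2) (H.inv_mem ha.2)⟩
        have hrel := hc (B ⊓ H) hBHA hc2 hBH
        have hAidx : A.index ≠ 0 := by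
          rw [← Subgroup.relIndex_mul_index hAH]
          exact Nat.mul_ne_zero hArel hidx.index_ne_zero
        have hidx1 : (B ⊓ H).index ≠ 0 := by
          rw [← Subgroup.relIndex_mul_index hBHA]
          exact Nat.mul_ne_zero hrel hAidx
        apply aux_tail
        intro h0
        apply hidx1
        have hdvd := Subgroup.index_dvd_of_le
          (le_inf inf_le_left (inf_le_left.trans hBL) : B ⊓ H ≤ B ⊓ L)
        rw [h0] at hdvd
        exact Nat.eq_zero_of_zero_dvd hdvd
end

section
/- Let G be a just infinite group that is not virtually abelian, and let K be a non-trivial subgroup of G that is subnormal of defect at most 2 (i.e., K ⊴ L ⊴ G for some L), such that distinct G-conjugates of K intersect trivially. Then K is basal in G: the normal closure K^G is the internal direct product of the distinct conjugates of K. -/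
/-- Let `G` be just infinite and not virtually abelian, and let `K` be a non-trivial
subgroup that is subnormal of defect at most 2, whose distinct conjugates intersect
trivially.  Then `K` is basal: there are finitely many conjugates of `K`; they are
independent, pairwise commute, and together generate the normal closure of `K`
(i.e. the normal closure is their internal direct product). -/
theorem stmt8 {G : Type*} [Group G] (hji : JustInfinite G)
    (hnva : ¬ ∃ A : Subgroup G, (∀ a ∈ A, ∀ b ∈ A, a * b = b * a) ∧ A.FiniteIndex)
    (K : Subgroup G) (hK : K ≠ ⊥)
    (hsub : ∃ L : Subgroup G, L.Normal ∧ K ≤ L ∧ ∀ g ∈ L, ∀ k ∈ K, g * k * g⁻¹ ∈ K)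
    (htriv : ∀ g h : G,
      K.map (MulAut.conj g).toMonoidHom ≠ K.map (MulAut.conj h).toMonoidHom →
      K.map (MulAut.conj g).toMonoidHom ⊓ K.map (MulAut.conj h).toMonoidHom = ⊥) :
    {L : Subgroup G | ∃ g : G, L = K.map (MulAut.conj g).toMonoidHom}.Finite ∧
    sSup {L : Subgroup G | ∃ g : G, L = K.map (MulAut.conj g).toMonoidHom} =
      Subgroup.normalClosure (K : Set G) ∧
    sSupIndep {L : Subgroup G | ∃ g : G, L = K.map (MulAut.conj g).toMonoidHom} ∧
    ∀ L ∈ {L : Subgroup G | ∃ g : G, L = K.map (MulAut.conj g).toMonoidHom},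
      ∀ M ∈ {L : Subgroup G | ∃ g : G, L = K.map (MulAut.conj g).toMonoidHom},
        L ≠ M → ∀ x ∈ L, ∀ y ∈ M, Commute x y := by
  obtain ⟨L, hLn, hKL, hLK⟩ := hsub
  set Kg : G → Subgroup G := fun g => K.map (MulAut.conj g).toMonoidHom with hKg
  set S : Set (Subgroup G) := {M : Subgroup G | ∃ g : G, M = Kg g} with hS
  -- membership in a conjugate
  have hmem : ∀ (g x : G), x ∈ Kg g ↔ g⁻¹ * x * g ∈ K := by
    intro g x
    rw [hKg]
    rw [Subgroup.mem_map_equiv, MulAut.conj_symm_apply]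
  have hmem' : ∀ (g k : G), k ∈ K → g * k * g⁻¹ ∈ Kg g := by
    intro g k hk
    rw [hmem]
    have : g⁻¹ * (g * k * g⁻¹) * g = k := by group
    rwa [this]
  -- K is a conjugate of itself
  have hK1 : Kg 1 = K := by
    ext x
    rw [hmem]
    simp
  -- each conjugate is contained in L
  have hKgL : ∀ g, Kg g ≤ L := by
    intro g x hx
    rw [hmem] at hx
    have := hLn.conj_mem _ (hKL hx) g
    have h2 : g * (g⁻¹ * x * g) * g⁻¹ = x := by group
    rwa [h2] at this
  -- each conjugate is normal in L
  have hnormL : ∀ g, ∀ y ∈ L, ∀ x ∈ Kg g, y * x * y⁻¹ ∈ Kg g := by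
    intro g y hy x hx
    rw [hmem] at hx ⊢
    have hy' : g⁻¹ * y * g ∈ L := by
      have := hLn.conj_mem _ hy g⁻¹
      simpa using this
    have := hLK _ hy' _ hx
    have h2 : (g⁻¹ * y * g) * (g⁻¹ * x * g) * (g⁻¹ * y * g)⁻¹ =
        g⁻¹ * (y * x * y⁻¹) * g := by group
    rwa [h2] at this
  -- distinct conjugates commute elementwise
  have hcomm : ∀ g h : G, Kg g ≠ Kg h → ∀ x ∈ Kg g, ∀ y ∈ Kg h, Commute x y := by
    intro g h hne x hx y hy
    have hxL : x ∈ L := hKgL g hx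
    have hyL : y ∈ L := hKgL h hy
    have hc1 : x * y * x⁻¹ * y⁻¹ ∈ Kg h := by
      have h1 : x * y * x⁻¹ ∈ Kg h := hnormL h x hxL y hy
      have := (Kg h).mul_mem h1 ((Kg h).inv_mem hy)
      simpa [mul_assoc] using this
    have hc2 : x * y * x⁻¹ * y⁻¹ ∈ Kg g := by
      have h1 : y * x⁻¹ * y⁻¹ ∈ Kg g := hnormL g y hyL x⁻¹ ((Kg g).inv_mem hx)
      have := (Kg g).mul_mem hx h1
      simpa [mul_assoc] using this
    have hbot : x * y * x⁻¹ * y⁻¹ ∈ (⊥ : Subgroup G) := by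
      rw [← htriv g h hne]
      exact ⟨hc2, hc1⟩
    rw [Subgroup.mem_bot] at hbot
    have : x * y = y * x := by
      have := congrArg (fun z => z * y * x) hbot
      simpa [mul_assoc] using this
    exact this
  -- the "center" of K is trivial
  set ZK : Subgroup G := K ⊓ Subgroup.centralizer (K : Set G) with hZK
  have hZbot : ZK = ⊥ := by
    by_contra hne
    apply hnva
    refine ⟨Subgroup.normalClosure (ZK : Set G), ?_, ?_⟩
    · -- abelian: generators pairwise commute
      -- first: conjugates of elements of ZK centralize the corresponding conjugate of K
      have hcent : ∀ (g z : G), z ∈ ZK → ∀ u ∈ Kg g, Commute (g * z * g⁻¹) u := by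
        intro g z hz u hu
        rw [hmem] at hu
        obtain ⟨hz1, hz2⟩ := hz
        have hc : Commute z (g⁻¹ * u * g) := by
          have := Subgroup.mem_centralizer_iff.mp hz2 _ hu
          exact this.symm
        have : (g * z * g⁻¹) * u = u * (g * z * g⁻¹) := by
          have h1 : u = g * (g⁻¹ * u * g) * g⁻¹ := by group
          rw [h1]
          have h2 : g * z * g⁻¹ * (g * (g⁻¹ * u * g) * g⁻¹) =
              g * (z * (g⁻¹ * u * g)) * g⁻¹ := by group
          have h3 : g * (g⁻¹ * u * g) * g⁻¹ * (g * z * g⁻¹) =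
              g * ((g⁻¹ * u * g) * z) * g⁻¹ := by group
          rw [h2, h3, hc]
        exact this
      have hgen : ∀ a ∈ Group.conjugatesOfSet (ZK : Set G),
          ∀ b ∈ Group.conjugatesOfSet (ZK : Set G), Commute a b := by
        intro a ha b hb
        rw [Group.mem_conjugatesOfSet_iff] at ha hb
        obtain ⟨z, hz, hcz⟩ := ha
        obtain ⟨w, hw, hcw⟩ := hb
        rw [isConj_iff] at hcz hcw
        obtain ⟨g, rfl⟩ := hcz
        obtain ⟨h, rfl⟩ := hcw
        have haK : g * z * g⁻¹ ∈ Kg g := hmem' g z hz.1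
        have hbK : h * w * h⁻¹ ∈ Kg h := hmem' h w hw.1
        by_cases heq : Kg g = Kg h
        · exact hcent g z hz (h * w * h⁻¹) (heq ▸ hbK)
        · exact hcomm g h heq _ haK _ hbK
      intro a ha b hb
      have : Subgroup.normalClosure (ZK : Set G) =
          Subgroup.closure (Group.conjugatesOfSet (ZK : Set G)) := rfl
      rw [this] at ha hb
      induction ha using Subgroup.closure_induction with
      | mem x hx =>
        induction hb using Subgroup.closure_induction with
        | mem y hy => exact hgen x hx y hy
        | one => exact Commute.one_right x
        | mul y z _ _ h1 h2 => exact Commute.mul_right h1 h2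
        | inv y _ h1 => exact Commute.inv_right h1
      | one => exact Commute.one_left b
      | mul x y _ _ h1 h2 => exact Commute.mul_left h1 h2
      | inv x _ h1 => exact Commute.inv_left h1
    · -- finite index
      refine hji.2 _ Subgroup.normalClosure_normal ?_
      intro hbot
      apply hne
      rw [eq_bot_iff, ← hbot]
      exact Subgroup.le_normalClosure
  -- hence each conjugate has trivial center
  have hZg : ∀ g : G, ∀ x ∈ Kg g, (∀ u ∈ Kg g, u * x = x * u) → x = 1 := by
    intro g x hx hc
    have h1 : g⁻¹ * x * g ∈ K := (hmem g x).mp hx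
    have h2 : g⁻¹ * x * g ∈ Subgroup.centralizer (K : Set G) := by
      rw [Subgroup.mem_centralizer_iff]
      intro k hk
      have hu : g * k * g⁻¹ ∈ Kg g := hmem' g k hk
      have := hc _ hu
      -- (g k g⁻¹) x = x (g k g⁻¹) → k (g⁻¹ x g) = (g⁻¹ x g) k
      have e : k * (g⁻¹ * x * g) = g⁻¹ * ((g * k * g⁻¹) * x) * g := by group
      rw [e, this]
      group
    have : g⁻¹ * x * g ∈ ZK := ⟨h1, h2⟩
    rw [hZbot, Subgroup.mem_bot] at this
    have e : x = g * (g⁻¹ * x * g) * g⁻¹ := by group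
    rw [e, this]
    group
  -- L is nontrivial, hence finite index
  have hLne : L ≠ ⊥ := by
    intro h
    exact hK (le_bot_iff.mp (h ▸ hKL))
  have hLfi : L.FiniteIndex := hji.2 L hLn hLne
  haveI := hLfi
  haveI : Finite (G ⧸ L) := inferInstance
  -- conjugation by elements of L fixes K
  have hfix : ∀ l ∈ L, Kg l = K := by
    intro l hl
    ext x
    rw [hmem]
    constructor
    · intro hx
      have := hLK _ hl _ hx
      have e : l * (l⁻¹ * x * l) * l⁻¹ = x := by group
      rwa [e] at this
    · intro hx
      have hl' : l⁻¹ ∈ L := L.inv_mem hl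
      have := hLK _ hl' _ hx
      simpa using this
  -- the map g ↦ Kg g factors through G/L
  have hdescend : ∀ a b : G, a⁻¹ * b ∈ L → Kg a = Kg b := by
    intro a b hab
    ext x
    rw [hmem, hmem]
    have e : b⁻¹ * x * b = (a⁻¹ * b)⁻¹ * (a⁻¹ * x * a) * (a⁻¹ * b) := by group
    constructor
    · intro hx
      rw [e]
      have h' : (a⁻¹ * b)⁻¹ ∈ L := L.inv_mem hab
      have := hLK _ h' _ hx
      simpa [mul_assoc] using this
    · intro hx
      rw [e] at hx
      have := hLK _ hab _ hx
      have e2 : (a⁻¹ * b) * ((a⁻¹ * b)⁻¹ * (a⁻¹ * x * a) * (a⁻¹ * b)) * (a⁻¹ * b)⁻¹ =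
          a⁻¹ * x * a := by group
      rwa [e2] at this
  -- Finiteness
  have hfin : S.Finite := by
    have : S ⊆ Set.range (fun q : G ⧸ L =>
        Quotient.liftOn' q Kg (fun a b h => hdescend a b (QuotientGroup.leftRel_apply.mp h))) := by
      rintro M ⟨g, rfl⟩
      exact ⟨QuotientGroup.mk g, rfl⟩
    exact Set.Finite.subset (Set.finite_range _) this
  refine ⟨hfin, ?_, ?_, ?_⟩
  · -- sSup S = normalClosure K
    apply le_antisymm
    · apply sSup_le
      rintro M ⟨g, rfl⟩
      intro x hx
      rw [hmem] at hx
      have h1 : g⁻¹ * x * g ∈ Subgroup.normalClosure (K : Set G) :=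
        Subgroup.subset_normalClosure hx
      have := Subgroup.normalClosure_normal.conj_mem _ h1 g
      have e : g * (g⁻¹ * x * g) * g⁻¹ = x := by group
      rwa [e] at this
    · have : Subgroup.normalClosure (K : Set G) =
          Subgroup.closure (Group.conjugatesOfSet (K : Set G)) := rfl
      rw [this, Subgroup.closure_le]
      intro x hx
      rw [Group.mem_conjugatesOfSet_iff] at hx
      obtain ⟨k, hk, hck⟩ := hx
      rw [isConj_iff] at hck
      obtain ⟨g, rfl⟩ := hck
      refine Subgroup.mem_sSup_of_mem ?_ (hmem' g k hk)
      exact ⟨g, rfl⟩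
  · -- sSupIndep
    rintro M ⟨g, rfl⟩
    rw [Subgroup.disjoint_def]
    intro x hx hx'
    have hsup : sSup (S \ {Kg g}) ≤ Subgroup.centralizer ((Kg g : Subgroup G) : Set G) := by
      apply sSup_le
      rintro N ⟨⟨h, rfl⟩, hne⟩
      intro y hy
      rw [Subgroup.mem_centralizer_iff]
      intro u hu
      have hne' : Kg g ≠ Kg h := fun e => hne (by simp [e.symm])
      exact hcomm g h hne' u hu y hy
    have hx'' := hsup hx'
    rw [Subgroup.mem_centralizer_iff] at hx''
    exact hZg g x hx (fun u hu => hx'' u hu)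
  · -- pairwise commuting
    rintro M ⟨g, rfl⟩ N ⟨h, rfl⟩ hne x hx y hy
    exact hcomm g h hne x hx y hy
end

section
/- Let G be a just infinite group that is not virtually abelian, and let B be a basal subgroup of G. Then N_G(B)/C_G(B) is just infinite. -/
section Stmt9Aux

variable {G : Type*} [Group G]

private lemma stmt9_mem_map_conj (B : Subgroup G) (g x : G) :
    x ∈ B.map (MulAut.conj g).toMonoidHom ↔ g⁻¹ * x * g ∈ B := by
  rw [Subgroup.mem_map_equiv, MulAut.conj_symm_apply]

private lemma stmt9_map_conj_eq_iff (B : Subgroup G) (g : G) :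
    B.map (MulAut.conj g).toMonoidHom = B ↔ g ∈ (Subgroup.normalizer (B : Set G)) := by
  rw [SetLike.ext_iff, Subgroup.mem_normalizer_iff'']
  constructor
  · intro h x
    exact ((h x).symm.trans (stmt9_mem_map_conj B g x))
  · intro h x
    exact (stmt9_mem_map_conj B g x).trans (h x).symm

private lemma stmt9_centralizer_le_normalizer (B : Subgroup G) :
    Subgroup.centralizer (B : Set G) ≤ (Subgroup.normalizer (B : Set G)) := by
  intro c hc
  rw [Subgroup.mem_centralizer_iff] at hc
  rw [Subgroup.mem_normalizer_iff]
  intro h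
  constructor
  · intro hh
    have e : c * h * c⁻¹ = h := by
      rw [← hc h hh]; group
    rwa [e]
  · intro hh
    have e := hc _ hh
    -- e : (c * h * c⁻¹) * c = c * (c * h * c⁻¹)
    have e2 : c * h = c * (c * h * c⁻¹) := by
      calc c * h = c * h * c⁻¹ * c := by group
        _ = c * (c * h * c⁻¹) := e
    have e3 : h = c * h * c⁻¹ := mul_left_cancel e2
    rwa [← e3] at hh

end Stmt9Aux

open scoped commutatorElement

/-- Let `G` be just infinite and not virtually abelian, and let `B` be a basal subgroup of
`G` (the normal closure of `B` is the internal direct product of the finitely many distinct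
conjugates of `B`).  Then `N_G(B) / C_G(B)` is just infinite. -/
theorem stmt9 {G : Type*} [Group G] (hji : JustInfinite G)
    (hnva : ¬ ∃ A : Subgroup G, (∀ a ∈ A, ∀ b ∈ A, a * b = b * a) ∧ A.FiniteIndex)
    (B : Subgroup G) (hB : B ≠ ⊥)
    (hfin : {L : Subgroup G | ∃ g : G, L = B.map (MulAut.conj g).toMonoidHom}.Finite)
    (hgen : sSup {L : Subgroup G | ∃ g : G, L = B.map (MulAut.conj g).toMonoidHom} =
      Subgroup.normalClosure (B : Set G))
    (hind : sSupIndep {L : Subgroup G | ∃ g : G, L = B.map (MulAut.conj g).toMonoidHom})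
    (hcomm : ∀ L ∈ {L : Subgroup G | ∃ g : G, L = B.map (MulAut.conj g).toMonoidHom},
      ∀ M ∈ {L : Subgroup G | ∃ g : G, L = B.map (MulAut.conj g).toMonoidHom},
        L ≠ M → ∀ x ∈ L, ∀ y ∈ M, Commute x y)
    [hnorm : ((Subgroup.centralizer (B : Set G)).subgroupOf (Subgroup.normalizer (B : Set G))).Normal] :
    JustInfinite
      (↥(Subgroup.normalizer (B : Set G)) ⧸ (Subgroup.centralizer (B : Set G)).subgroupOf (Subgroup.normalizer (B : Set G))) := by
  classical
  obtain ⟨hGinf, hjin⟩ := hji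
  set S := {L : Subgroup G | ∃ g : G, L = B.map (MulAut.conj g).toMonoidHom} with hSdef
  have hBS : B ∈ S := by
    refine ⟨1, ?_⟩
    ext x
    rw [stmt9_mem_map_conj]
    simp
  -- The normalizer has finite index.
  have hSfin : Finite S := hfin
  have hwd : ∀ g h : G, g⁻¹ * h ∈ (Subgroup.normalizer (B : Set G)) →
      B.map (MulAut.conj g).toMonoidHom = B.map (MulAut.conj h).toMonoidHom := by
    intro g h hk
    ext x
    rw [stmt9_mem_map_conj, stmt9_mem_map_conj]
    have hiff := Subgroup.mem_normalizer_iff''.mp hk (g⁻¹ * x * g)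
    have key : (g⁻¹ * h)⁻¹ * (g⁻¹ * x * g) * (g⁻¹ * h) = h⁻¹ * x * h := by group
    rw [key] at hiff
    exact hiff
  have hNqfin : Finite (G ⧸ (Subgroup.normalizer (B : Set G))) := by
    let F : G → S := fun g => ⟨B.map (MulAut.conj g).toMonoidHom, ⟨g, rfl⟩⟩
    have hFc : ∀ a b : G, @Setoid.r _ (QuotientGroup.leftRel (Subgroup.normalizer (B : Set G))) a b →
        F a = F b := by
      intro a b hab
      rw [QuotientGroup.leftRel_apply] at hab
      exact Subtype.ext (hwd a b hab)
    let f : G ⧸ (Subgroup.normalizer (B : Set G)) → S := fun q => Quotient.liftOn' q F hFc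
    have hfinj : Function.Injective f := by
      intro q1 q2 h12
      induction q1 using Quotient.inductionOn'
      induction q2 using Quotient.inductionOn'
      rename_i g h
      have h12' : B.map (MulAut.conj g).toMonoidHom
          = B.map (MulAut.conj h).toMonoidHom := congrArg Subtype.val h12
      apply Quotient.sound'
      rw [QuotientGroup.leftRel_apply]
      rw [← stmt9_map_conj_eq_iff]
      ext x
      rw [stmt9_mem_map_conj]
      have hpt := SetLike.ext_iff.mp h12' (g * x * g⁻¹)
      rw [stmt9_mem_map_conj, stmt9_mem_map_conj] at hpt
      have e1 : g⁻¹ * (g * x * g⁻¹) * g = x := by group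
      have e2 : h⁻¹ * (g * x * g⁻¹) * h = (g⁻¹ * h)⁻¹ * x * (g⁻¹ * h) := by group
      rw [e1, e2] at hpt
      exact hpt.symm
    exact Finite.of_injective f hfinj
  haveI : Finite (G ⧸ (Subgroup.normalizer (B : Set G))) := hNqfin
  have hNfi : (Subgroup.normalizer (B : Set G)).FiniteIndex := Subgroup.finiteIndex_of_finite_quotient
  -- The centralizer does not have finite index in G.
  have hCnotfi : ¬ (Subgroup.centralizer (B : Set G)).FiniteIndex := by
    intro hCfi
    haveI := hCfi
    set K := (Subgroup.centralizer (B : Set G)).normalCore with hKdef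
    haveI hKfi : K.FiniteIndex := Subgroup.finiteIndex_normalCore _
    haveI hKnorm : K.Normal := Subgroup.normalCore_normal _
    have hKC : ∀ k ∈ K, ∀ b ∈ B, b * k = k * b := fun k hk =>
      Subgroup.mem_centralizer_iff.mp (Subgroup.normalCore_le _ hk)
    have hcentK : (Subgroup.centralizer (K : Set G)).Normal := by
      constructor
      intro x hx g
      rw [Subgroup.mem_centralizer_iff] at hx ⊢
      intro k hk
      have hk' : g⁻¹ * k * g ∈ K := by
        have := hKnorm.conj_mem k hk g⁻¹
        simpa using this
      have hcx := hx _ hk'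
      calc k * (g * x * g⁻¹) = g * ((g⁻¹ * k * g) * x) * g⁻¹ := by group
        _ = g * (x * (g⁻¹ * k * g)) * g⁻¹ := by rw [hcx]
        _ = (g * x * g⁻¹) * k := by group
    haveI := hcentK
    have hncl : Subgroup.normalClosure (B : Set G) ≤ Subgroup.centralizer (K : Set G) :=
      Subgroup.normalClosure_le_normal (fun b hb =>
        Subgroup.mem_centralizer_iff.mpr (fun k hk => (hKC k hk b hb).symm))
    have hnclne : Subgroup.normalClosure (B : Set G) ≠ ⊥ := by
      intro h
      have hle := Subgroup.le_normalClosure (H := B)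
      rw [h, le_bot_iff] at hle
      exact hB hle
    haveI hnclfi : (Subgroup.normalClosure (B : Set G)).FiniteIndex :=
      hjin _ Subgroup.normalClosure_normal hnclne
    refine hnva ⟨K ⊓ Subgroup.normalClosure (B : Set G), ?_, inferInstance⟩
    intro a ha b hb
    have hbK : b ∈ K := (Subgroup.mem_inf.mp hb).1
    have haC : a ∈ Subgroup.centralizer (K : Set G) := hncl (Subgroup.mem_inf.mp ha).2
    exact (Subgroup.mem_centralizer_iff.mp haC b hbK).symm
  constructor
  -- Part 1 : the quotient is infinite.
  · rw [← not_finite_iff_infinite]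
    intro hfinq
    apply hCnotfi
    haveI := hfinq
    have h1 : ((Subgroup.centralizer (B : Set G)).subgroupOf (Subgroup.normalizer (B : Set G))).index ≠ 0 :=
      Subgroup.index_ne_zero_of_finite
    constructor
    rw [← Subgroup.relIndex_mul_index (stmt9_centralizer_le_normalizer B)]
    exact Nat.mul_ne_zero h1 hNfi.index_ne_zero
  -- Part 2 : every nontrivial normal subgroup of the quotient has finite index.
  · intro M' hM'norm hM'ne
    set C' := (Subgroup.centralizer (B : Set G)).subgroupOf (Subgroup.normalizer (B : Set G)) with hC'def
    set M : Subgroup ↥(Subgroup.normalizer (B : Set G)) := M'.comap (QuotientGroup.mk' C') with hMdef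
    have hMnorm : M.Normal := hM'norm.comap _
    have hC'M : C' ≤ M := by
      intro x hx
      have h1 : QuotientGroup.mk' C' x = 1 := by
        rw [QuotientGroup.mk'_apply, QuotientGroup.eq_one_iff]
        exact hx
      rw [hMdef, Subgroup.mem_comap, h1]
      exact M'.one_mem
    obtain ⟨x, hxM', hxne⟩ : ∃ x ∈ M', x ≠ 1 := by
      by_contra h
      push_neg at h
      exact hM'ne ((Subgroup.eq_bot_iff_forall _).mpr h)
    obtain ⟨mN, rfl⟩ := QuotientGroup.mk'_surjective C' x
    have hmM : mN ∈ M := by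
      rw [hMdef, Subgroup.mem_comap]; exact hxM'
    have hmC : (mN : G) ∉ Subgroup.centralizer (B : Set G) := by
      intro h
      apply hxne
      rw [QuotientGroup.mk'_apply, QuotientGroup.eq_one_iff]
      exact Subgroup.mem_subgroupOf.mpr h
    obtain ⟨b, hbB, hbc⟩ : ∃ b ∈ B, ¬ (b * (mN : G) = (mN : G) * b) := by
      by_contra h
      push_neg at h
      exact hmC (Subgroup.mem_centralizer_iff.mpr h)
    set bN : ↥(Subgroup.normalizer (B : Set G)) := ⟨b, Subgroup.le_normalizer hbB⟩ with hbNdef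
    set dN : ↥(Subgroup.normalizer (B : Set G)) := ⁅mN, bN⁆ with hdNdef
    have hdMem : dN ∈ M := by
      have h1 : bN * mN⁻¹ * bN⁻¹ ∈ M := hMnorm.conj_mem _ (inv_mem hmM) bN
      have h2 := mul_mem hmM h1
      rw [hdNdef, commutatorElement_def]
      simpa [mul_assoc] using h2
    have hdcoe : (dN : G) = (mN : G) * b * (mN : G)⁻¹ * b⁻¹ := by
      rw [hdNdef, commutatorElement_def]
      rfl
    have hdne1 : (dN : G) ≠ 1 := by
      intro h
      apply hbc
      rw [hdcoe] at h
      have h2 : ⁅(mN : G), b⁆ = 1 := by rw [commutatorElement_def]; exact h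
      exact (commutatorElement_eq_one_iff_mul_comm.mp h2).symm
    have hdB : (dN : G) ∈ B := by
      have h1 : (mN : G) * b * (mN : G)⁻¹ ∈ B :=
        (Subgroup.mem_normalizer_iff.mp mN.2 b).mp hbB
      rw [hdcoe]
      exact mul_mem h1 (inv_mem hbB)
    set Dcl := Subgroup.normalClosure ({(dN : G)} : Set G) with hDcldef
    have hDclne : Dcl ≠ ⊥ := by
      intro h
      have hmem : (dN : G) ∈ Dcl := Subgroup.subset_normalClosure (Set.mem_singleton _)
      rw [h] at hmem
      exact hdne1 (Subgroup.mem_bot.mp hmem)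
    have hDclfi : Dcl.FiniteIndex := hjin Dcl Subgroup.normalClosure_normal hDclne
    have hDclM : Dcl ≤ M.map (Subgroup.normalizer (B : Set G)).subtype := by
      rw [hDcldef]
      show Subgroup.closure (Group.conjugatesOfSet ({(dN : G)} : Set G)) ≤ _
      rw [Subgroup.closure_le]
      intro y hy
      rw [Group.mem_conjugatesOfSet_iff] at hy
      obtain ⟨a, ha, hconj⟩ := hy
      rw [Set.mem_singleton_iff] at ha
      subst ha
      obtain ⟨g, hg⟩ := isConj_iff.mp hconj
      by_cases hgN : g ∈ (Subgroup.normalizer (B : Set G))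
      · refine ⟨(⟨g, hgN⟩ : ↥(Subgroup.normalizer (B : Set G))) * dN * (⟨g, hgN⟩ : ↥(Subgroup.normalizer (B : Set G)))⁻¹,
          hMnorm.conj_mem dN hdMem ⟨g, hgN⟩, ?_⟩
        rw [← hg]
        rfl
      · have hLS : B.map (MulAut.conj g).toMonoidHom ∈ S := ⟨g, rfl⟩
        have hLne : B.map (MulAut.conj g).toMonoidHom ≠ B := fun h =>
          hgN ((stmt9_map_conj_eq_iff B g).mp h)
        have hxL : g * (dN : G) * g⁻¹ ∈ B.map (MulAut.conj g).toMonoidHom := by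
          rw [stmt9_mem_map_conj]
          have e : g⁻¹ * (g * (dN : G) * g⁻¹) * g = (dN : G) := by group
          rw [e]
          exact hdB
        have hxC : g * (dN : G) * g⁻¹ ∈ Subgroup.centralizer (B : Set G) := by
          rw [Subgroup.mem_centralizer_iff]
          intro z hz
          exact (hcomm _ hLS B hBS hLne _ hxL z hz).symm.eq
        refine ⟨⟨g * (dN : G) * g⁻¹, stmt9_centralizer_le_normalizer B hxC⟩,
          hC'M (Subgroup.mem_subgroupOf.mpr hxC), ?_⟩
        rw [← hg]
        rfl
    have hMapfi : (M.map (Subgroup.normalizer (B : Set G)).subtype).index ≠ 0 := by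
      have hdvd := Subgroup.index_dvd_of_le hDclM
      intro h
      rw [h] at hdvd
      exact hDclfi.index_ne_zero (Nat.eq_zero_of_zero_dvd hdvd)
    have hMfi : M.index ≠ 0 := by
      intro h
      apply hMapfi
      rw [Subgroup.index_map_subtype, h, zero_mul]
    have hMM' : M.index = M'.index :=
      Subgroup.index_comap_of_surjective M' (QuotientGroup.mk'_surjective C')
    exact ⟨hMM' ▸ hMfi⟩
end

section
/- Let G be a profinite group, and define for each isomorphism θ between open subgroups H and K of G the index ratio ϱ(θ) = |G:H| / |G:K| ∈ ℚ_{>0}. Then ϱ is multiplicative: if θ: H → K and ψ: K' → L are composable isomorphisms of open subgroups (with θ(H) ⊆ K'), then ϱ(θψ) = ϱ(θ)ϱ(ψ), where θψ denotes the composite restricted to an appropriate open subgroup. -/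
/-- The index ratio of a profinite group is multiplicative: if `θ : H ≃ K` and
`ψ : K' ≃ L` are (continuous) isomorphisms between open subgroups with `K ≤ K'`, then the
index ratio of the composite equals the product of the index ratios. -/
theorem stmt13 {G : Type*} [Group G] [TopologicalSpace G] [IsTopologicalGroup G]
    [CompactSpace G] [T2Space G] [TotallyDisconnectedSpace G]
    (H K K' L : Subgroup G)
    (hH : IsOpen (H : Set G)) (hK : IsOpen (K : Set G))
    (hK' : IsOpen (K' : Set G)) (hL : IsOpen (L : Set G))
    (θ : ↥H ≃* ↥K) (ψ : ↥K' ≃* ↥L)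
    (hθ : Continuous θ) (hψ : Continuous ψ) (hKK' : K ≤ K') :
    ((H.index : ℚ) /
        ((MonoidHom.range (L.subtype.comp (ψ.toMonoidHom.comp
          ((Subgroup.inclusion hKK').comp θ.toMonoidHom)))).index : ℚ)) =
      ((H.index : ℚ) / (K.index : ℚ)) * ((K'.index : ℚ) / (L.index : ℚ)) := by
  have finK := Subgroup.quotient_finite_of_isOpen K hK
  have finK' := Subgroup.quotient_finite_of_isOpen K' hK'
  have finL := Subgroup.quotient_finite_of_isOpen L hL
  have hKne : K.index ≠ 0 := Nat.card_ne_zero.mpr ⟨inferInstance, finK⟩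
  have hK'ne : K'.index ≠ 0 := Nat.card_ne_zero.mpr ⟨inferInstance, finK'⟩
  have hLne : L.index ≠ 0 := Nat.card_ne_zero.mpr ⟨inferInstance, finL⟩
  set R := MonoidHom.range (L.subtype.comp (ψ.toMonoidHom.comp
      ((Subgroup.inclusion hKK').comp θ.toMonoidHom))) with hR
  -- Compute R as a map
  have hRmap : R = (K.subgroupOf K').map (L.subtype.comp ψ.toMonoidHom) := by
    rw [hR]
    rw [show L.subtype.comp (ψ.toMonoidHom.comp ((Subgroup.inclusion hKK').comp θ.toMonoidHom))
        = (L.subtype.comp ψ.toMonoidHom).comp ((Subgroup.inclusion hKK').comp θ.toMonoidHom) by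
      ext x; rfl]
    rw [MonoidHom.range_comp, MonoidHom.range_comp, MonoidHom.range_eq_top_of_surjective _ θ.surjective,
      ← MonoidHom.range_eq_map, Subgroup.inclusion_range]
  have hinj : Function.Injective (L.subtype.comp ψ.toMonoidHom) :=
    L.subtype_injective.comp ψ.injective
  have hrange : (L.subtype.comp ψ.toMonoidHom).range = L := by
    rw [MonoidHom.range_comp, MonoidHom.range_eq_top_of_surjective _ ψ.surjective,
      ← MonoidHom.range_eq_map, L.range_subtype]
  have hRindex : R.index = K.relIndex K' * L.index := by
    rw [hRmap, Subgroup.index_map_of_injective _ hinj, hrange]; rfl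
  have key : R.index * K'.index = K.index * L.index := by
    rw [hRindex, mul_right_comm, Subgroup.relIndex_mul_index hKK']
  have hRne : R.index ≠ 0 := by
    intro h
    rw [h, zero_mul] at key
    exact mul_ne_zero hKne hLne key.symm
  have keyQ : (R.index : ℚ) * K'.index = (K.index : ℚ) * L.index := by
    exact_mod_cast congrArg (Nat.cast : ℕ → ℚ) key
  field_simp
  linear_combination (-(H.index : ℚ)) * keyQ
end

section
/- Let G be a finite group acting faithfully and primitively on a finite set Ω, and let H be a normal subgroup of G. Then the Frattini subgroup of H is trivial: Φ(H) = 1. -/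
open Subgroup

/-- For a finite group `G` and a normal subgroup `H`, the Frattini subgroup of `H`
(viewed in `G`) is contained in the Frattini subgroup of `G`. -/
lemma frattini_map_le_frattini_aux {G : Type*} [Group G] [Finite G]
    (H : Subgroup G) (hH : H.Normal) :
    (frattini ↥H).map H.subtype ≤ frattini G := by
  set F := (frattini ↥H).map H.subtype with hF
  have hFnormal : F.Normal := inferInstance
  have hFH : F ≤ H := map_subtype_le _
  rw [frattini, Order.radical, le_iInf_iff]
  intro M
  rw [le_iInf_iff]
  intro hM
  by_contra hFM
  have hsup : F ⊔ M = ⊤ := hM.2 _ (lt_of_le_of_ne le_sup_right (by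
    intro h
    exact hFM (h ▸ le_sup_left)))
  -- show `(H ⊓ M).subgroupOf H ⊔ frattini H = ⊤`
  have key : (H ⊓ M).subgroupOf H ⊔ frattini ↥H = ⊤ := by
    rw [eq_top_iff]
    rintro ⟨h, hh⟩ -
    have : h ∈ F ⊔ M := hsup ▸ mem_top h
    rw [sup_comm, ← SetLike.mem_coe, Subgroup.mul_normal] at this
    obtain ⟨m, hm, f, hf, rfl⟩ := this
    have hmH : m ∈ H := by
      have hfH : f ∈ H := hFH hf
      have := mul_mem hh (inv_mem hfH)
      simpa using this
    have hfH : f ∈ H := hFH hf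
    obtain ⟨f', hf', hff'⟩ := hf
    have h1 : (⟨m * f, hh⟩ : H) = ⟨m, hmH⟩ * ⟨f, hfH⟩ := rfl
    rw [h1]
    refine mul_mem (mem_sup_left ?_) (mem_sup_right ?_)
    · exact mem_subgroupOf.mpr ⟨hmH, hm⟩
    · have : (⟨f, hfH⟩ : H) = f' := Subtype.ext hff'.symm
      rw [this]; exact hf'
  have := frattini_nongenerating key
  have hHM : H ≤ M := by
    intro h hh
    have : (⟨h, hh⟩ : H) ∈ (H ⊓ M).subgroupOf H := this ▸ mem_top _
    exact (mem_subgroupOf.mp this).2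
  exact hFM (hFH.trans hHM)

/-- Let `G` be a finite group acting faithfully and primitively (transitively, with maximal
point stabilisers) on a finite nonempty set `Ω`, and let `H` be a normal subgroup of `G`.
Then the Frattini subgroup of `H` is trivial. -/
theorem stmt14 {G Ω : Type*} [Group G] [Finite G] [Finite Ω] [Nonempty Ω]
    [MulAction G Ω] [FaithfulSMul G Ω]
    (htrans : MulAction.IsPretransitive G Ω)
    (hprim : ∀ ω : Ω, IsCoatom (MulAction.stabilizer G ω))
    (H : Subgroup G) (hH : H.Normal) :
    frattini ↥H = ⊥ := by
  have h1 : (frattini ↥H).map H.subtype ≤ frattini G :=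
    frattini_map_le_frattini_aux H hH
  have h2 : frattini G = ⊥ := by
    rw [eq_bot_iff]
    intro g hg
    have hstab : ∀ ω : Ω, g ∈ MulAction.stabilizer G ω := fun ω =>
      frattini_le_coatom (hprim ω) hg
    have : g = 1 := by
      apply (FaithfulSMul.eq_of_smul_eq_smul (M := G) (α := Ω))
      intro ω
      simpa using hstab ω
    simp [this]
  have h3 : (frattini ↥H).map H.subtype ≤ ⊥ := h2 ▸ h1
  rw [eq_bot_iff]
  intro x hx
  have : H.subtype x ∈ (⊥ : Subgroup G) := h3 (mem_map_of_mem _ hx)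
  simp only [mem_bot] at this ⊢
  exact Subtype.ext this
end

section
/- Let G be a finite group, H a subgroup of G of index h, t the index of the normal core of H in G, and for a positive integer n let I_n(G) denote the intersection of all normal subgroups of G of index at most n. Then I_n(G) ≥ I_n(H) ≥ I_{t·n^h}(G), where I_n(H) is the intersection of all normal subgroups of H of index at most n in H. -/
section Aux

variable {G : Type*} [Group G] [Finite G]

/-- Index and relindex are never zero in a finite group. -/
private lemma relindex_ne_zero' (A B : Subgroup G) : A.relIndex B ≠ 0 :=
  Subgroup.FiniteIndex.index_ne_zero (H := A.subgroupOf B)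

/-- For any normal subgroup `L` of `H` of index at most `n`, there is a normal subgroup
`M` of `G` of index at most `t * n ^ h` contained in the image of `L` in `G`. -/
private lemma exists_normal_le_map {H : Subgroup G} {n : ℕ} (hn : 0 < n)
    (L : Subgroup H) (hL : L.Normal) (hLn : L.index ≤ n) :
    ∃ M : Subgroup G, M.Normal ∧ M.index ≤ H.normalCore.index * n ^ H.index ∧
      M ≤ L.map H.subtype := by
  classical
  set L' : Subgroup G := L.map H.subtype with hL'
  set C : Subgroup G := H.normalCore with hC
  set M₀ : Subgroup G := L' ⊓ C with hM₀
  refine ⟨M₀.normalCore, inferInstance, ?_, (M₀.normalCore_le).trans inf_le_left⟩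
  -- `M₀` is normal in `H` (conjugation by elements of `H` preserves it)
  have key : ∀ h ∈ H, ∀ x ∈ M₀, h * x * h⁻¹ ∈ M₀ := by
    intro h hh x hx
    obtain ⟨hxL', hxC⟩ := Subgroup.mem_inf.mp hx
    refine Subgroup.mem_inf.mpr ⟨?_, ?_⟩
    · obtain ⟨y, hy, rfl⟩ := hxL'
      exact ⟨⟨h, hh⟩ * y * ⟨h, hh⟩⁻¹, hL.conj_mem y hy ⟨h, hh⟩, rfl⟩
    · exact Subgroup.Normal.conj_mem inferInstance _ hxC h
  have hiff : ∀ h ∈ H, ∀ x : G, x ∈ M₀ ↔ h * x * h⁻¹ ∈ M₀ := by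
    intro h hh x
    constructor
    · exact key h hh x
    · intro hx
      have := key h⁻¹ (inv_mem hh) _ hx
      simpa [mul_assoc] using this
  have hmem : ∀ g x : G, x ∈ M₀.map (MulAut.conj g).toMonoidHom ↔ g⁻¹ * x * g ∈ M₀ := by
    intro g x
    rw [Subgroup.mem_map_equiv, MulAut.conj_symm_apply]
  -- the conjugates of `M₀`, indexed by `G ⧸ H`
  set f : G → Subgroup G := fun g => M₀.map (MulAut.conj g).toMonoidHom with hf
  have hwd : ∀ g₁ g₂ : G, (QuotientGroup.leftRel H) g₁ g₂ → f g₁ = f g₂ := by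
    intro g₁ g₂ h12
    rw [QuotientGroup.leftRel_apply] at h12
    ext x
    rw [hf]
    simp only
    rw [hmem, hmem]
    have heq : (g₁⁻¹ * g₂)⁻¹ * (g₁⁻¹ * x * g₁) * ((g₁⁻¹ * g₂)⁻¹)⁻¹ = g₂⁻¹ * x * g₂ := by
      group
    rw [hiff _ (inv_mem h12) (g₁⁻¹ * x * g₁), heq]
  set F : G ⧸ H → Subgroup G := Quotient.lift f hwd with hF
  have hFmk : ∀ g : G, F (QuotientGroup.mk g) = f g := fun g => rfl
  -- the normal core of `M₀` is the intersection of the conjugates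
  have hcore : M₀.normalCore = ⨅ q : G ⧸ H, F q := by
    apply le_antisymm
    · refine le_iInf fun q => ?_
      induction q using Quotient.inductionOn with
      | h g =>
        intro x hx
        have hx' : ∀ b : G, b * x * b⁻¹ ∈ M₀ := hx
        rw [hFmk, hmem]
        simpa using hx' g⁻¹
    · intro x hx
      have hx' : ∀ q : G ⧸ H, x ∈ F q := Subgroup.mem_iInf.mp hx
      show ∀ b : G, b * x * b⁻¹ ∈ M₀
      intro b
      have := hx' (QuotientGroup.mk b⁻¹)
      rw [hFmk, hmem] at this
      simpa using this
  -- `C` is invariant under conjugation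
  have hCconj : ∀ g : G, C.map ((MulAut.conj g).symm).toMonoidHom = C := by
    intro g
    ext x
    rw [Subgroup.mem_map_equiv, MulEquiv.symm_symm, MulAut.conj_apply]
    constructor
    · intro hx
      have := Subgroup.Normal.conj_mem (H.normalCore_normal) _ hx g⁻¹
      simpa [mul_assoc] using this
    · intro hx
      exact Subgroup.Normal.conj_mem (H.normalCore_normal) _ hx g
  -- bound the relative index of `M₀` in `C`
  have hrel : M₀.relIndex C ≤ n := by
    have h1 : M₀.relIndex C = L'.relIndex C := Subgroup.inf_relIndex_right L' C
    have h2 : L'.relIndex H = L.index := by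
      have : L'.subgroupOf H = L := by
        rw [hL', ← Subgroup.comap_subtype]
        exact Subgroup.comap_map_eq_self_of_injective H.subtype_injective L
      rw [Subgroup.relIndex, this]
    have h3 : L'.relIndex C ≤ L'.relIndex H := by
      refine Subgroup.relIndex_le_of_le_right H.normalCore_le ?_
      exact relindex_ne_zero' _ _
    omega
  have hfactor : ∀ q : G ⧸ H, (F q).relIndex C ≤ n := by
    intro q
    induction q using Quotient.inductionOn with
    | h g =>
      rw [hFmk]
      show (M₀.map (MulAut.conj g).toMonoidHom).relIndex C ≤ n
      rw [Subgroup.map_equiv_eq_comap_symm', Subgroup.relIndex_comap, hCconj]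
      exact hrel
  -- put everything together
  have hMC : M₀.normalCore ≤ C := (M₀.normalCore_le).trans inf_le_right
  rw [← Subgroup.relIndex_mul_index hMC, mul_comm]
  refine Nat.mul_le_mul_left _ ?_
  haveI : Fintype (G ⧸ H) := Fintype.ofFinite _
  calc (M₀.normalCore).relIndex C = (⨅ q : G ⧸ H, F q).relIndex C := by rw [hcore]
    _ ≤ ∏ q : G ⧸ H, (F q).relIndex C := Subgroup.relIndex_iInf_le F
    _ ≤ n ^ (Finset.univ : Finset (G ⧸ H)).card :=
        Finset.prod_le_pow_card _ _ _ fun q _ => hfactor q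
    _ = n ^ H.index := by
        rw [Finset.card_univ, Subgroup.index_eq_card, Nat.card_eq_fintype_card]

end Aux

/-- Let `G` be a finite group, `H ≤ G` of index `h`, `t` the index of the normal core of
`H`, and `I_n(G)` the intersection of all normal subgroups of index at most `n`.  Then
`I_n(G) ≥ I_n(H) ≥ I_{t·n^h}(G)`. -/
theorem stmt18 {G : Type*} [Group G] [Finite G] (H : Subgroup G) (n : ℕ) (hn : 0 < n) :
    (sInf {N : Subgroup ↥H | N.Normal ∧ N.index ≤ n}).map H.subtype ≤
        sInf {N : Subgroup G | N.Normal ∧ N.index ≤ n} ∧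
      sInf {N : Subgroup G | N.Normal ∧ N.index ≤ H.normalCore.index * n ^ H.index} ≤
        (sInf {N : Subgroup ↥H | N.Normal ∧ N.index ≤ n}).map H.subtype := by
  constructor
  · refine le_sInf fun N hN => ?_
    obtain ⟨hNnorm, hNn⟩ := hN
    have h1 : sInf {N : Subgroup ↥H | N.Normal ∧ N.index ≤ n} ≤ N.subgroupOf H := by
      refine sInf_le ⟨inferInstance, ?_⟩
      have hdvd : N.relIndex H ∣ N.index := Subgroup.relIndex_dvd_index_of_normal N H
      have hne : N.index ≠ 0 := Subgroup.FiniteIndex.index_ne_zero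
      have : N.relIndex H ≤ N.index := Nat.le_of_dvd (Nat.pos_of_ne_zero hne) hdvd
      exact le_trans this hNn
    calc (sInf {N : Subgroup ↥H | N.Normal ∧ N.index ≤ n}).map H.subtype
        ≤ (N.subgroupOf H).map H.subtype := Subgroup.map_mono h1
      _ = N ⊓ H := Subgroup.subgroupOf_map_subtype N H
      _ ≤ N := inf_le_left
  · intro x hx
    have hxall : ∀ N ∈ {N : Subgroup G | N.Normal ∧
        N.index ≤ H.normalCore.index * n ^ H.index}, x ∈ N := Subgroup.mem_sInf.mp hx
    have hxH : x ∈ H := by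
      have : x ∈ H.normalCore := hxall H.normalCore
        ⟨inferInstance, Nat.le_mul_of_pos_right _ (pow_pos hn _)⟩
      exact H.normalCore_le this
    refine ⟨⟨x, hxH⟩, ?_, rfl⟩
    rw [SetLike.mem_coe, Subgroup.mem_sInf]
    rintro L ⟨hLnorm, hLn⟩
    obtain ⟨M, hMnorm, hMidx, hMle⟩ := exists_normal_le_map hn L hLnorm hLn
    have hxM : x ∈ M := hxall M ⟨hMnorm, hMidx⟩
    obtain ⟨y, hy, hyx⟩ := hMle hxM
    have : y = ⟨x, hxH⟩ := H.subtype_injective (by simpa using hyx)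
    rwa [this] at hy
end

section
/- Let G be a profinite group with a p-Sylow subgroup S, let φ: G → H be a surjective continuous homomorphism with kernel K a pro-p' group, let P be a closed subgroup of S and Q = φ(P). Then φ restricts to an isomorphism ψ: P → Q, and the map sending an automorphism α of P induced by conjugation by N_G(P) to ψ⁻¹αψ is an isomorphism from the group of automorphisms of P induced by N_G(P) onto the group of automorphisms of Q induced by N_H(Q). -/
open scoped Pointwise

section Aux

variable {G : Type*} [Group G] [TopologicalSpace G] [IsTopologicalGroup G]
  [CompactSpace G] [T2Space G] [TotallyDisconnectedSpace G]

/-- Every open neighborhood of 1 in a profinite group contains an open normal subgroup. -/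
lemma aux_exists_openNormal {U : Set G} (hU : IsOpen U) (h1 : 1 ∈ U) :
    ∃ N : Subgroup G, N.Normal ∧ IsOpen (N : Set G) ∧ (N : Set G) ⊆ U := by
  obtain ⟨V, hVclopen, h1V, hVU⟩ := compact_exists_isClopen_in_isOpen hU h1
  obtain ⟨N, hN⟩ :=
    IsTopologicalGroup.exist_openNormalSubgroup_sub_clopen_nhds_of_one hVclopen h1V
  exact ⟨N.toSubgroup, N.isNormal', N.isOpen', hN.trans hVU⟩

/-- A closed subgroup is the intersection of its open-normal thickenings. -/
lemma aux_mem_of_forall_mul {P : Subgroup G} (hPc : IsClosed (P : Set G)) {x : G}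
    (h : ∀ N : Subgroup G, N.Normal → IsOpen (N : Set G) → x ∈ (P : Set G) * N) :
    x ∈ P := by
  by_contra hx
  have hUopen : IsOpen ((fun w => x * w) ⁻¹' (↑P)ᶜ : Set G) :=
    (hPc.isOpen_compl).preimage (continuous_mul_left x)
  have h1U : (1 : G) ∈ (fun w => x * w) ⁻¹' (↑P)ᶜ := by simpa using hx
  obtain ⟨N, hNn, hNo, hNU⟩ := aux_exists_openNormal hUopen h1U
  obtain ⟨a, ha, b, hb, hab⟩ := h N hNn hNo
  have hbinv : b⁻¹ ∈ N := N.inv_mem hb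
  have := hNU hbinv
  simp only [Set.mem_preimage, Set.mem_compl_iff] at this
  apply this
  have : x * b⁻¹ = a := by rw [← hab]; group
  rw [this]; exact ha

end Aux

section Aux2

variable {G : Type*} [Group G]

/-- The order of the image of `x ∈ K` in `K ⧸ (N ∩ K)` equals the order of its image
in `G ⧸ N`. -/
lemma aux_orderOf_eq (N K : Subgroup G) [N.Normal] {x : G} (hx : x ∈ K) :
    orderOf ((QuotientGroup.mk ⟨x, hx⟩ : K ⧸ (N.subgroupOf K))) =
      orderOf ((QuotientGroup.mk x : G ⧸ N)) := by
  rw [orderOf_eq_orderOf_iff]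
  intro n
  rw [← QuotientGroup.mk_pow, ← QuotientGroup.mk_pow, QuotientGroup.eq_one_iff,
    QuotientGroup.eq_one_iff, Subgroup.mem_subgroupOf]
  rfl

end Aux2

open scoped Pointwise

/-- In a finite group, if `A` is a `p`-subgroup with `p'`-normal complement candidate `B`,
any `p`-subgroup `A'` of `A ⊔ B` of the same cardinality as `A` is conjugate to `A` by an
element of `B`. -/
lemma aux_finite_conj {p : ℕ} [Fact p.Prime] {W : Type*} [Group W] [Finite W]
    (A A' B : Subgroup W) [hBn : B.Normal] (hA : IsPGroup p A) (hA' : IsPGroup p A')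
    (hcard : Nat.card A' = Nat.card A) (hle : A' ≤ A ⊔ B)
    (hB : ∀ x ∈ B, ¬ p ∣ orderOf x) :
    ∃ b ∈ B, ∀ x : W, x ∈ A' ↔ b * x * b⁻¹ ∈ A := by
  set L := A ⊔ B with hLdef
  have hAL : A ≤ L := le_sup_left
  have hBL : B ≤ L := le_sup_right
  have hA'L : A' ≤ L := hle
  set A₁ := A.subgroupOf L with hA₁def
  set A₁' := A'.subgroupOf L with hA₁'def
  set B₁ := B.subgroupOf L with hB₁def
  have horder : ∀ y : ↥L, (y : W) ∈ A → (y : W) ∈ B → y = 1 := by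
    intro y hyA hyB
    obtain ⟨k, hk⟩ := hA ⟨_, hyA⟩
    have hyk : (y : W) ^ (p ^ k) = 1 := congrArg Subtype.val hk
    obtain ⟨i, hi, hio⟩ :=
      (Nat.dvd_prime_pow Fact.out).mp (orderOf_dvd_of_pow_eq_one hyk)
    have hi0 : i = 0 := by
      by_contra hi0
      exact hB _ hyB (hio ▸ dvd_pow_self p hi0)
    have h1 : orderOf (y : W) = 1 := by rw [hio, hi0, pow_zero]
    exact Subtype.ext (orderOf_eq_one_iff.mp h1)
  have hA₁pg : IsPGroup p A₁ := hA.of_equiv (Subgroup.subgroupOfEquivOfLe hAL).symm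
  have hA₁'pg : IsPGroup p A₁' := hA'.of_equiv (Subgroup.subgroupOfEquivOfLe hA'L).symm
  -- the quotient of L by B₁ has the cardinality of A₁
  let f : ↥A₁ →* (↥L ⧸ B₁) := (QuotientGroup.mk' B₁).comp A₁.subtype
  have hfbij : Function.Bijective f := by
    constructor
    · rw [injective_iff_map_eq_one]
      intro x hx
      have hxB : ((x : ↥L) : W) ∈ B := by
        have : (x : ↥L) ∈ B₁ := (QuotientGroup.eq_one_iff _).mp hx
        exact Subgroup.mem_subgroupOf.mp this
      have hxA : ((x : ↥L) : W) ∈ A := Subgroup.mem_subgroupOf.mp x.2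
      exact Subtype.ext (horder _ hxA hxB)
    · intro z
      obtain ⟨y, rfl⟩ := QuotientGroup.mk'_surjective B₁ z
      have hy : y ∈ A₁ ⊔ B₁ := by
        suffices h : A₁ ⊔ B₁ = ⊤ by rw [h]; trivial
        rw [eq_top_iff]
        rintro w -
        have hw : (w : W) ∈ (↑A * ↑B : Set W) := by
          rw [← Subgroup.mul_normal]; exact w.2
        obtain ⟨a, ha, b, hb, hab⟩ := hw
        have : w = (⟨a, hAL ha⟩ : ↥L) * ⟨b, hBL hb⟩ := Subtype.ext hab.symm
        rw [this]
        exact Subgroup.mul_mem_sup (Subgroup.mem_subgroupOf.mpr ha)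
          (Subgroup.mem_subgroupOf.mpr hb)
      have hy' : y ∈ (↑A₁ * ↑B₁ : Set ↥L) := by
        rw [← Subgroup.mul_normal]; exact hy
      obtain ⟨a, ha, b, hb, hab⟩ := hy'
      refine ⟨⟨a, ha⟩, ?_⟩
      have : (QuotientGroup.mk' B₁) b = 1 := (QuotientGroup.eq_one_iff _).mpr hb
      show (QuotientGroup.mk' B₁) a = _
      rw [← hab, map_mul, this, mul_one]
  have hcardq : Nat.card (↥L ⧸ B₁) = Nat.card A₁ :=
    (Nat.card_congr (Equiv.ofBijective f hfbij)).symm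
  have hA₁pos : 0 < Nat.card A₁ := Nat.card_pos
  have hindex : A₁.index = Nat.card B₁ := by
    have h1 : Nat.card A₁ * A₁.index = Nat.card ↥L := Subgroup.card_mul_index A₁
    have h2 : Nat.card ↥L = Nat.card (↥L ⧸ B₁) * Nat.card B₁ :=
      Subgroup.card_eq_card_quotient_mul_card_subgroup B₁
    rw [hcardq] at h2
    exact Nat.eq_of_mul_eq_mul_left hA₁pos (by rw [h1, h2])
  have hnotdvd : ¬ p ∣ A₁.index := by
    rw [hindex]
    intro hdvd
    obtain ⟨b, hbord⟩ := exists_prime_orderOf_dvd_card' (G := ↥B₁) p hdvd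
    have hmem : (((b : ↥L) : W)) ∈ B := Subgroup.mem_subgroupOf.mp b.2
    have hordb : orderOf (((b : ↥L) : W)) = p := by
      rw [Subgroup.orderOf_coe, Subgroup.orderOf_coe, hbord]
    exact hB _ hmem (hordb ▸ dvd_refl p)
  let Syl := hA₁pg.toSylow hnotdvd
  obtain ⟨R, hA1'R⟩ := hA₁'pg.exists_le_sylow
  obtain ⟨g, hg⟩ := MulAction.exists_smul_eq (↥L) R Syl
  have hRconj : MulAut.conj g • (R : Subgroup ↥L) = A₁ := by
    rw [← Sylow.coe_subgroup_smul, hg]; rfl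
  have hle2 : MulAut.conj g • A₁' ≤ A₁ := by
    rw [← hRconj]
    exact Subgroup.pointwise_smul_le_pointwise_smul_iff.mpr hA1'R
  have hcA' : Nat.card A₁' = Nat.card A₁ := by
    rw [Nat.card_congr (Subgroup.subgroupOfEquivOfLe hA'L).toEquiv,
      Nat.card_congr (Subgroup.subgroupOfEquivOfLe hAL).toEquiv, hcard]
  have hcsm : Nat.card (MulAut.conj g • A₁' : Subgroup ↥L) = Nat.card A₁' :=
    (Nat.card_congr (Subgroup.equivSMul (MulAut.conj g) A₁').toEquiv).symm
  have heq : MulAut.conj g • A₁' = A₁ :=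
    Subgroup.eq_of_le_of_card_ge hle2 (by rw [hcsm, hcA'])
  have hiff : ∀ y : ↥L, y ∈ A₁' ↔ g * y * g⁻¹ ∈ A₁ := by
    intro y
    constructor
    · intro hy
      have h := Subgroup.smul_mem_pointwise_smul y (MulAut.conj g) A₁' hy
      rw [heq] at h
      simpa [MulAut.smul_def] using h
    · intro hy
      have h : MulAut.conj g • y ∈ MulAut.conj g • A₁' := by
        rw [heq]; simpa [MulAut.smul_def] using hy
      exact Subgroup.smul_mem_pointwise_smul_iff.mp h
  have hgmem : ((g : W)) ∈ (↑A * ↑B : Set W) := by rw [← Subgroup.mul_normal]; exact g.2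
  obtain ⟨a, ha, b, hb, hab⟩ := hgmem
  refine ⟨b, hb, fun x => ?_⟩
  constructor
  · intro hx
    have hxL : x ∈ L := hA'L hx
    have h2 := (hiff ⟨x, hxL⟩).mp (Subgroup.mem_subgroupOf.mpr hx)
    have h3 : (g : W) * x * (g : W)⁻¹ ∈ A := by
      have h := Subgroup.mem_subgroupOf.mp h2
      simpa using h
    have h4 : b * x * b⁻¹ = a⁻¹ * ((g : W) * x * (g : W)⁻¹) * a := by
      rw [← hab]; group
    rw [h4]
    exact A.mul_mem (A.mul_mem (A.inv_mem ha) h3) ha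
  · intro hx
    have h3 : (g : W) * x * (g : W)⁻¹ ∈ A := by
      have h5 : (g : W) * x * (g : W)⁻¹ = a * (b * x * b⁻¹) * a⁻¹ := by rw [← hab]; group
      rw [h5]
      exact A.mul_mem (A.mul_mem ha hx) (A.inv_mem ha)
    have hxL : x ∈ L := by
      have h6 : x = (g : W)⁻¹ * ((g : W) * x * (g : W)⁻¹) * (g : W) := by group
      rw [h6]
      exact L.mul_mem (L.mul_mem (L.inv_mem g.2) (hAL h3)) g.2
    have h2 : g * (⟨x, hxL⟩ : ↥L) * g⁻¹ ∈ A₁ :=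
      Subgroup.mem_subgroupOf.mpr (by simpa using h3)
    exact Subgroup.mem_subgroupOf.mp ((hiff _).mpr h2)

/-- A topological group is pro-`p` if its quotient by every open normal subgroup is a
`p`-group. -/
def IsProPGroup (p : ℕ) (G : Type*) [Group G] [TopologicalSpace G] : Prop :=
  ∀ (N : Subgroup G) (hN : N.Normal), IsOpen (N : Set G) →
    letI := hN
    IsPGroup p (G ⧸ N)

/-- A topological group is pro-`p'` if in its quotient by every open normal subgroup no
element has order divisible by `p`. -/
def IsProPPrimeGroup (p : ℕ) (G : Type*) [Group G] [TopologicalSpace G] : Prop :=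
  ∀ (N : Subgroup G) (hN : N.Normal), IsOpen (N : Set G) →
    letI := hN
    ∀ g : G ⧸ N, ¬ p ∣ orderOf g

/-- Let `G` be a profinite group with `p`-Sylow subgroup `S` (a maximal closed pro-`p`
subgroup), let `φ : G → H` be a continuous surjective homomorphism whose kernel is a
pro-`p'` group, let `P ≤ S` be closed and `Q = φ(P)`.  Then `φ` restricts to an isomorphism
`e : P ≃ Q`, and conjugating by `e` gives a bijection from the automorphisms of `P` induced
by `N_G(P)` onto the automorphisms of `Q` induced by `N_H(Q)`. -/
theorem stmt19 {p : ℕ} [Fact p.Prime]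
    {G H : Type*} [Group G] [TopologicalSpace G] [IsTopologicalGroup G]
    [CompactSpace G] [T2Space G] [TotallyDisconnectedSpace G]
    [Group H] [TopologicalSpace H] [IsTopologicalGroup H]
    [CompactSpace H] [T2Space H] [TotallyDisconnectedSpace H]
    (S : Subgroup G) (hSc : IsClosed (S : Set G)) (hSp : IsProPGroup p ↥S)
    (hSmax : ∀ T : Subgroup G, IsClosed (T : Set G) → IsProPGroup p ↥T → S ≤ T → T = S)
    (φ : G →* H) (hφc : Continuous φ) (hφs : Function.Surjective φ)
    (hker : IsProPPrimeGroup p ↥φ.ker)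
    (P : Subgroup G) (hPS : P ≤ S) (hPc : IsClosed (P : Set G)) :
    ∃ e : ↥P ≃* ↥(P.map φ),
      (∀ x : ↥P, ((e x : H)) = φ x) ∧
      Set.BijOn (fun α : ↥P → ↥P => (e : ↥P → ↥(P.map φ)) ∘ α ∘ (e.symm : ↥(P.map φ) → ↥P))
        {α : ↥P → ↥P | ∃ g ∈ Subgroup.normalizer (P : Set G), ∀ x : ↥P, ((α x : G)) = g * (x : G) * g⁻¹}
        {β : ↥(P.map φ) → ↥(P.map φ) | ∃ h ∈ Subgroup.normalizer ((P.map φ : Subgroup H) : Set H),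
          ∀ y : ↥(P.map φ), ((β y : H)) = h * (y : H) * h⁻¹} := by
  classical
  have hker_closed : IsClosed ((φ.ker : Subgroup G) : Set G) := by
    have h0 : ((φ.ker : Subgroup G) : Set G) = φ ⁻¹' {1} := by
      ext x; simp [MonoidHom.mem_ker]
    rw [h0]
    exact isClosed_singleton.preimage hφc
  -- elements of `S` have `p`-power order modulo every open normal subgroup
  have hpowN : ∀ (N : Subgroup G), N.Normal → IsOpen (N : Set G) → ∀ x ∈ S,
      ∃ n : ℕ, x ^ (p ^ n) ∈ N := by
    intro N hNn hNo x hx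
    haveI := hNn
    have hopen' : IsOpen ((N.subgroupOf S : Subgroup ↥S) : Set ↥S) := by
      rw [Subgroup.subgroupOf, Subgroup.coe_comap, Subgroup.coe_subtype]
      exact hNo.preimage continuous_subtype_val
    obtain ⟨n, hn⟩ := hSp (N.subgroupOf S) inferInstance hopen'
      (QuotientGroup.mk (⟨x, hx⟩ : ↥S))
    rw [← QuotientGroup.mk_pow] at hn
    have h1 := (QuotientGroup.eq_one_iff _).mp hn
    refine ⟨n, ?_⟩
    simpa using Subgroup.mem_subgroupOf.mp h1
  -- the kernel of φ meets P trivially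
  have hkerOpen : ∀ (N : Subgroup G), IsOpen (N : Set G) →
      IsOpen ((N.subgroupOf φ.ker : Subgroup ↥φ.ker) : Set ↥φ.ker) := by
    intro N hNo
    rw [Subgroup.subgroupOf, Subgroup.coe_comap, Subgroup.coe_subtype]
    exact hNo.preimage continuous_subtype_val
  have htriv : ∀ x ∈ P, x ∈ φ.ker → x = 1 := by
    intro x hxP hxK
    by_contra hne
    have hop : IsOpen ({x}ᶜ : Set G) := isClosed_singleton.isOpen_compl
    have h1m : (1 : G) ∈ ({x}ᶜ : Set G) := by simpa using fun h => hne h.symm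
    obtain ⟨N, hNn, hNo, hNsub⟩ := aux_exists_openNormal hop h1m
    haveI := hNn
    obtain ⟨n, hn⟩ := hpowN N hNn hNo x (hPS hxP)
    have hdvd : orderOf (QuotientGroup.mk x : G ⧸ N) ∣ p ^ n := by
      apply orderOf_dvd_of_pow_eq_one
      rw [← QuotientGroup.mk_pow]
      exact (QuotientGroup.eq_one_iff _).mpr hn
    have hnd : ¬ p ∣ orderOf (QuotientGroup.mk x : G ⧸ N) := by
      have h2 := hker (N.subgroupOf φ.ker) inferInstance (hkerOpen N hNo)
        (QuotientGroup.mk (⟨x, hxK⟩ : ↥φ.ker))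
      rwa [aux_orderOf_eq N φ.ker hxK] at h2
    obtain ⟨i, hi, hio⟩ := (Nat.dvd_prime_pow Fact.out).mp hdvd
    have hi0 : i = 0 := by
      by_contra hi0
      exact hnd (hio ▸ dvd_pow_self p hi0)
    have hzero : orderOf (QuotientGroup.mk x : G ⧸ N) = 1 := by rw [hio, hi0, pow_zero]
    have hxN : x ∈ N := (QuotientGroup.eq_one_iff _).mp (orderOf_eq_one_iff.mp hzero)
    exact (hNsub hxN) rfl
  -- the isomorphism e
  have hinj : Function.Injective (φ.subgroupMap P) := by
    rw [injective_iff_map_eq_one]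
    intro x hx
    have h1 : φ (x : G) = 1 := congrArg Subtype.val hx
    exact Subtype.ext (htriv _ x.2 ((MonoidHom.mem_ker.mpr h1)))
  let e : ↥P ≃* ↥(P.map φ) :=
    MulEquiv.ofBijective (φ.subgroupMap P) ⟨hinj, φ.subgroupMap_surjective P⟩
  have he : ∀ x : ↥P, ((e x : H)) = φ x := fun x => rfl
  refine ⟨e, he, ?_, ?_, ?_⟩
  · -- MapsTo
    rintro α ⟨g, hg, hα⟩
    refine ⟨φ g, ?_, ?_⟩
    · rw [Subgroup.mem_normalizer_iff]
      intro y
      constructor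
      · intro hy
        obtain ⟨x, hx, rfl⟩ := Subgroup.mem_map.mp hy
        refine Subgroup.mem_map.mpr ⟨g * x * g⁻¹,
          (Subgroup.mem_normalizer_iff.mp hg x).mp hx, by
            rw [map_mul, map_mul, map_inv]⟩
      · intro hy
        obtain ⟨x', hx', hxeq⟩ := Subgroup.mem_map.mp hy
        have hgx : g⁻¹ * x' * g ∈ P := by
          have h3 := (Subgroup.mem_normalizer_iff.mp ((Subgroup.normalizer (P : Set G)).inv_mem hg) x').mp hx'
          rwa [inv_inv] at h3
        refine Subgroup.mem_map.mpr ⟨g⁻¹ * x' * g, hgx, ?_⟩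
        rw [map_mul, map_mul, map_inv, hxeq]
        group
    · intro y
      show ((e (α (e.symm y)) : H)) = φ g * (y : H) * (φ g)⁻¹
      rw [he, hα]
      have hsy : φ ((e.symm y : ↥P) : G) = (y : H) := by
        rw [← he, e.apply_symm_apply]
      rw [map_mul, map_mul, map_inv, hsy]
  · -- InjOn
    intro α hα α' hα' hEq
    funext x
    have h1 := congrFun hEq (e x)
    simp only [Function.comp] at h1
    rw [e.symm_apply_apply] at h1
    exact e.injective h1
  · -- SurjOn
    rintro β ⟨h, hh, hβ⟩
    obtain ⟨g', hg'⟩ := hφs h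
    set c := MulAut.conj g' with hc
    set P' : Subgroup G := P.map c.toMonoidHom with hP'
    have hP'c : IsClosed (P' : Set G) := by
      have h1 : (P' : Set G) = (fun y => g' * y * g'⁻¹) '' (P : Set G) := by
        rw [hP', Subgroup.coe_map]
        rfl
      rw [h1]
      exact ((hPc.isCompact).image (by fun_prop)).isClosed
    have hP'PK : ∀ x ∈ P', x ∈ ((P : Set G) * (φ.ker : Set G)) := by
      intro x hx
      obtain ⟨y, hy, rfl⟩ := Subgroup.mem_map.mp hx
      have hφx : φ (c.toMonoidHom y) ∈ P.map φ := by
        have h1 : φ (c.toMonoidHom y) = h * φ y * h⁻¹ := by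
          show φ (g' * y * g'⁻¹) = h * φ y * h⁻¹
          rw [map_mul, map_mul, map_inv, hg']
        rw [h1]
        exact (Subgroup.mem_normalizer_iff.mp hh (φ y)).mp
          (Subgroup.mem_map.mpr ⟨y, hy, rfl⟩)
      obtain ⟨q, hq, hqeq⟩ := Subgroup.mem_map.mp hφx
      refine ⟨q, hq, q⁻¹ * c.toMonoidHom y, ?_, by group⟩
      show q⁻¹ * c.toMonoidHom y ∈ φ.ker
      rw [MonoidHom.mem_ker, map_mul, map_inv, hqeq]
      group
    -- the compact family of candidate conjugators
    let ι := {N : Subgroup G // N.Normal ∧ IsOpen (N : Set G)}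
    haveI : Nonempty ι := ⟨⟨⊤, inferInstance, by rw [Subgroup.coe_top]; exact isOpen_univ⟩⟩
    let Z : ι → Set G := fun N =>
      {k | k ∈ φ.ker ∧ (∀ x ∈ P', k * x * k⁻¹ ∈ ((P : Set G) * (N.1 : Set G))) ∧
        (∀ x ∈ P, k⁻¹ * x * k ∈ ((P' : Set G) * (N.1 : Set G)))}
    have hZclosed : ∀ i, IsClosed (Z i) := by
      intro i
      have hNc : IsClosed (i.1 : Set G) := Subgroup.isClosed_of_isOpen _ i.2.2
      have hPN : IsClosed ((P : Set G) * (i.1 : Set G)) :=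
        ((hPc.isCompact).mul (hNc.isCompact)).isClosed
      have hP'N : IsClosed ((P' : Set G) * (i.1 : Set G)) :=
        ((hP'c.isCompact).mul (hNc.isCompact)).isClosed
      have h1 : Z i = ((φ.ker : Subgroup G) : Set G) ∩
          ((⋂ x ∈ (P' : Set G), (fun k => k * x * k⁻¹) ⁻¹' ((P : Set G) * (i.1 : Set G))) ∩
           (⋂ x ∈ (P : Set G), (fun k => k⁻¹ * x * k) ⁻¹' ((P' : Set G) * (i.1 : Set G)))) := by
        ext k
        simp only [Set.mem_inter_iff, Set.mem_iInter, Set.mem_preimage, Set.mem_setOf_eq,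
          SetLike.mem_coe, Z]
      rw [h1]
      refine hker_closed.inter (IsClosed.inter ?_ ?_)
      · exact isClosed_biInter fun x hx => hPN.preimage (by fun_prop)
      · exact isClosed_biInter fun x hx => hP'N.preimage (by fun_prop)
    have hZdirected : Directed (· ⊇ ·) Z := by
      intro i j
      have hnorm : (i.1 ⊓ j.1).Normal := by
        refine { conj_mem := ?_ }
        intro n hn g
        rw [Subgroup.mem_inf] at hn ⊢
        exact ⟨i.2.1.conj_mem n hn.1 g, j.2.1.conj_mem n hn.2 g⟩
      have hopen : IsOpen ((i.1 ⊓ j.1 : Subgroup G) : Set G) := by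
        rw [Subgroup.coe_inf]
        exact i.2.2.inter j.2.2
      refine ⟨⟨i.1 ⊓ j.1, hnorm, hopen⟩, ?_, ?_⟩
      · intro k hk
        refine ⟨hk.1, fun x hx => ?_, fun x hx => ?_⟩
        · exact Set.mul_subset_mul_left (by rw [Subgroup.coe_inf]; exact Set.inter_subset_left)
            (hk.2.1 x hx)
        · exact Set.mul_subset_mul_left (by rw [Subgroup.coe_inf]; exact Set.inter_subset_left)
            (hk.2.2 x hx)
      · intro k hk
        refine ⟨hk.1, fun x hx => ?_, fun x hx => ?_⟩
        · exact Set.mul_subset_mul_left (by rw [Subgroup.coe_inf]; exact Set.inter_subset_right)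
            (hk.2.1 x hx)
        · exact Set.mul_subset_mul_left (by rw [Subgroup.coe_inf]; exact Set.inter_subset_right)
            (hk.2.2 x hx)
    have hZnonempty : ∀ i, (Z i).Nonempty := by
      rintro ⟨N, hNn, hNo⟩
      haveI := hNn
      haveI : Finite (G ⧸ N) := N.quotient_finite_of_isOpen hNo
      set π := QuotientGroup.mk' N with hπ
      set A := P.map π with hAdef
      set A' := P'.map π with hA'def
      set B := φ.ker.map π with hBdef
      haveI hBnormal : B.Normal :=
        Subgroup.Normal.map inferInstance π (QuotientGroup.mk'_surjective N)
      have hApg : IsPGroup p A := by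
        rintro ⟨z, hz⟩
        obtain ⟨x, hx, rfl⟩ := Subgroup.mem_map.mp hz
        obtain ⟨n, hn⟩ := hpowN N hNn hNo x (hPS hx)
        refine ⟨n, Subtype.ext ?_⟩
        show (π x) ^ (p ^ n) = 1
        rw [← map_pow]
        exact (QuotientGroup.eq_one_iff _).mpr hn
      have hA'pg : IsPGroup p A' := by
        rintro ⟨z, hz⟩
        obtain ⟨x, hx, rfl⟩ := Subgroup.mem_map.mp hz
        obtain ⟨y, hy, rfl⟩ := Subgroup.mem_map.mp hx
        obtain ⟨n, hn⟩ := hpowN N hNn hNo y (hPS hy)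
        refine ⟨n, Subtype.ext ?_⟩
        show (π (c.toMonoidHom y)) ^ (p ^ n) = 1
        rw [← map_pow, ← map_pow]
        apply (QuotientGroup.eq_one_iff _).mpr
        show g' * y ^ (p ^ n) * g'⁻¹ ∈ N
        exact hNn.conj_mem _ hn _
      have hAcard : Nat.card A' = Nat.card A := by
        have hcomm : π.comp c.toMonoidHom =
            ((MulAut.conj (π g')).toMonoidHom).comp π := by
          ext x
          show π (g' * x * g'⁻¹) = π g' * π x * (π g')⁻¹
          rw [map_mul, map_mul, map_inv]
        have h1 : A' = A.map (MulAut.conj (π g')).toMonoidHom := by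
          rw [hA'def, hP', hAdef, Subgroup.map_map, Subgroup.map_map, hcomm]
        rw [h1]
        exact (Nat.card_congr
          (Subgroup.equivMapOfInjective A _ (MulAut.conj (π g')).injective).toEquiv).symm
      have hAle : A' ≤ A ⊔ B := by
        rintro z hz
        obtain ⟨x, hx, rfl⟩ := Subgroup.mem_map.mp hz
        obtain ⟨q, hq, w, hw, hqw⟩ := hP'PK x hx
        rw [← hqw, map_mul]
        exact Subgroup.mul_mem_sup (Subgroup.mem_map.mpr ⟨q, hq, rfl⟩)
          (Subgroup.mem_map.mpr ⟨w, hw, rfl⟩)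
      have hBord : ∀ z ∈ B, ¬ p ∣ orderOf z := by
        intro z hz
        obtain ⟨w, hw, rfl⟩ := Subgroup.mem_map.mp hz
        have h2 := hker (N.subgroupOf φ.ker) inferInstance (hkerOpen N hNo)
          (QuotientGroup.mk (⟨w, hw⟩ : ↥φ.ker))
        rwa [aux_orderOf_eq N φ.ker hw] at h2
      obtain ⟨b, hbB, hbiff⟩ := aux_finite_conj A A' B hApg hA'pg hAcard hAle hBord
      obtain ⟨kk, hkk, hkkeq⟩ := Subgroup.mem_map.mp hbB
      refine ⟨kk, hkk, fun x hx => ?_, fun x hx => ?_⟩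
      · have h1 : π (kk * x * kk⁻¹) ∈ A := by
          rw [map_mul, map_mul, map_inv, hkkeq]
          exact (hbiff (π x)).mp (Subgroup.mem_map.mpr ⟨x, hx, rfl⟩)
        obtain ⟨q, hq, hqe⟩ := Subgroup.mem_map.mp h1
        have h2 : q⁻¹ * (kk * x * kk⁻¹) ∈ N := by
          have h3 : π (q⁻¹ * (kk * x * kk⁻¹)) = 1 := by
            rw [map_mul, map_inv, hqe, inv_mul_cancel]
          exact (QuotientGroup.eq_one_iff _).mp h3
        exact ⟨q, hq, q⁻¹ * (kk * x * kk⁻¹), h2, by group⟩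
      · have h1 : π (kk⁻¹ * x * kk) ∈ A' := by
          apply (hbiff _).mpr
          have h6 : b * (π (kk⁻¹ * x * kk)) * b⁻¹ = π x := by
            rw [← hkkeq, map_mul, map_mul, map_inv]
            group
          rw [h6]
          exact Subgroup.mem_map.mpr ⟨x, hx, rfl⟩
        obtain ⟨q, hq, hqe⟩ := Subgroup.mem_map.mp h1
        have h2 : q⁻¹ * (kk⁻¹ * x * kk) ∈ N := by
          have h3 : π (q⁻¹ * (kk⁻¹ * x * kk)) = 1 := by
            rw [map_mul, map_inv, hqe, inv_mul_cancel]
          exact (QuotientGroup.eq_one_iff _).mp h3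
        exact ⟨q, hq, q⁻¹ * (kk⁻¹ * x * kk), h2, by group⟩
    obtain ⟨k, hk⟩ :=
      IsCompact.nonempty_iInter_of_directed_nonempty_isCompact_isClosed Z hZdirected
        hZnonempty (fun i => (hZclosed i).isCompact) hZclosed
    simp only [Set.mem_iInter] at hk
    have hkker : k ∈ φ.ker := (hk (Classical.arbitrary ι)).1
    have hconj1 : ∀ x ∈ P', k * x * k⁻¹ ∈ P := by
      intro x hx
      apply aux_mem_of_forall_mul hPc
      intro N hNn hNo
      exact (hk ⟨N, hNn, hNo⟩).2.1 x hx
    have hconj2 : ∀ x ∈ P, k⁻¹ * x * k ∈ P' := by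
      intro x hx
      apply aux_mem_of_forall_mul hP'c
      intro N hNn hNo
      exact (hk ⟨N, hNn, hNo⟩).2.2 x hx
    have hφg : φ (k * g') = h := by
      rw [map_mul, MonoidHom.mem_ker.mp hkker, one_mul, hg']
    have hgnorm : k * g' ∈ Subgroup.normalizer (P : Set G) := by
      rw [Subgroup.mem_normalizer_iff]
      intro x
      constructor
      · intro hx
        have h1 : g' * x * g'⁻¹ ∈ P' := Subgroup.mem_map.mpr ⟨x, hx, rfl⟩
        have h2 := hconj1 _ h1
        have h3 : k * g' * x * (k * g')⁻¹ = k * (g' * x * g'⁻¹) * k⁻¹ := by group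
        rw [h3]
        exact h2
      · intro hx
        obtain ⟨y, hy, hyeq⟩ := Subgroup.mem_map.mp (hconj2 _ hx)
        have h4 : g' * y * g'⁻¹ = g' * x * g'⁻¹ := by
          have h5 : (c.toMonoidHom y : G) = g' * y * g'⁻¹ := rfl
          rw [← h5, hyeq]
          group
        have hyx : y = x := by
          have h6 := mul_right_cancel h4
          exact mul_left_cancel h6
        exact hyx ▸ hy
    refine ⟨fun x => ⟨k * g' * (x : G) * (k * g')⁻¹,
      (Subgroup.mem_normalizer_iff.mp hgnorm (x : G)).mp x.2⟩,
      ⟨k * g', hgnorm, fun x => rfl⟩, ?_⟩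
    funext y
    apply Subtype.ext
    show ((e _ : H)) = ((β y : H))
    rw [he, hβ y]
    have hsy : φ ((e.symm y : ↥P) : G) = (y : H) := by
      rw [← he, e.apply_symm_apply]
    show φ (k * g' * ((e.symm y : ↥P) : G) * (k * g')⁻¹) = h * (y : H) * h⁻¹
    rw [map_mul, map_mul, map_inv, hsy, hφg]
end
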